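/- arXiv:2603.11448 — 6 statements merged into one kernel-verified Lean document; each statement's English description precedes it below -/
import Mathlib

section
/- If C is a convex cone of functions on a compact metric space X that contains all constant functions and is closed under pointwise minimum, then for any bounded upper semicontinuous function f on X, the C-envelope of f, defined as the pointwise infimum of all functions g in C with g ≥ f, again belongs to C, provided C is closed under bounded decreasing pointwise limits and every element of C admits a decreasing sequence of continuous functions in C converging to it pointwise. -/
open MeasureTheory Filter Topology

/-- Running minimum of a sequence of functions. -/
def stmt0MinSeq {X : Type*} (φ : ℕ → X → ℝ) : ℕ → X → ℝ
  | 0 => φ 0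
  | n + 1 => fun x => min (stmt0MinSeq φ n x) (φ (n + 1) x)

/-- If `C` is a convex cone of bounded upper semicontinuous functions on a
compact metric space `X` that contains all constants, is min-closed, admits decreasing
continuous approximations from above, and is closed under bounded decreasing pointwise
limits, then the `C`-envelope of any bounded upper semicontinuous `f` belongs to `C`. -/
theorem stmt_0 {X : Type*} [MetricSpace X] [CompactSpace X]
    (C : Set (X → ℝ))
    (hadd : ∀ g₁ ∈ C, ∀ g₂ ∈ C, g₁ + g₂ ∈ C)
    (hsmul : ∀ c : ℝ, 0 ≤ c → ∀ g ∈ C, c • g ∈ C)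
    (hbdd : ∀ g ∈ C, ∃ M : ℝ, ∀ x, |g x| ≤ M)
    (husc : ∀ g ∈ C, UpperSemicontinuous g)
    (hconst : ∀ c : ℝ, (fun _ : X => c) ∈ C)
    (hmin : ∀ g₁ ∈ C, ∀ g₂ ∈ C, (fun x => min (g₁ x) (g₂ x)) ∈ C)
    (happrox : ∀ g ∈ C, ∃ gn : ℕ → X → ℝ,
      (∀ n, gn n ∈ C ∧ Continuous (gn n)) ∧
      (∀ n x, gn (n + 1) x ≤ gn n x) ∧
      (∀ x, Tendsto (fun n => gn n x) atTop (nhds (g x))))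
    (hlim : ∀ gn : ℕ → X → ℝ, (∀ n, gn n ∈ C) →
      (∀ n x, gn (n + 1) x ≤ gn n x) →
      ∀ g : X → ℝ, (∃ M : ℝ, ∀ x, |g x| ≤ M) →
      (∀ x, Tendsto (fun n => gn n x) atTop (nhds (g x))) → g ∈ C)
    (f : X → ℝ) (hf : UpperSemicontinuous f) (hfb : ∃ M : ℝ, ∀ x, |f x| ≤ M) :
    (fun x => sInf {y : ℝ | ∃ g ∈ C, (∀ z, f z ≤ g z) ∧ y = g x}) ∈ C := by
  obtain ⟨M, hM⟩ := hfb
  set F : X → ℝ := fun x => sInf {y : ℝ | ∃ g ∈ C, (∀ z, f z ≤ g z) ∧ y = g x} with hFdef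
  have hMf : ∀ z, f z ≤ M := fun z => (abs_le.1 (hM z)).2
  have hmem : ∀ x, (M : ℝ) ∈ {y : ℝ | ∃ g ∈ C, (∀ z, f z ≤ g z) ∧ y = g x} :=
    fun x => ⟨fun _ => M, hconst M, hMf, rfl⟩
  have hbdd' : ∀ x, BddBelow {y : ℝ | ∃ g ∈ C, (∀ z, f z ≤ g z) ∧ y = g x} := by
    intro x
    refine ⟨f x, ?_⟩
    rintro y ⟨g, _, hgf, rfl⟩
    exact hgf x
  -- F ≤ g x for any admissible g
  have hFle : ∀ g ∈ C, (∀ z, f z ≤ g z) → ∀ x, F x ≤ g x := by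
    intro g hg hgf x
    exact csInf_le (hbdd' x) ⟨g, hg, hgf, rfl⟩
  have hfF : ∀ x, f x ≤ F x := by
    intro x
    refine le_csInf ⟨M, hmem x⟩ ?_
    rintro y ⟨g, _, hgf, rfl⟩
    exact hgf x
  -- the set of continuous admissible functions, in C(X, ℝ)
  set S : Set C(X, ℝ) := {h | (⇑h ∈ C) ∧ ∀ z, f z ≤ h z} with hSdef
  have hSne : S.Nonempty := ⟨ContinuousMap.const X M, hconst M, hMf⟩
  -- key approximation: continuous admissible functions approximate F pointwise
  have hkey : ∀ x, ∀ ε > (0:ℝ), ∃ h ∈ S, h x < F x + ε := by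
    intro x ε hε
    obtain ⟨y, ⟨g, hg, hgf, rfl⟩, hy⟩ :=
      exists_lt_of_csInf_lt (s := {y : ℝ | ∃ g ∈ C, (∀ z, f z ≤ g z) ∧ y = g x})
        ⟨M, hmem x⟩ (lt_add_of_pos_right (F x) (half_pos hε))
    obtain ⟨gn, hgn₁, hgn₂, hgn₃⟩ := happrox g hg
    have hanti : ∀ m, Antitone fun n => gn n m := fun m =>
      antitone_nat_of_succ_le fun n => hgn₂ n m
    have hge : ∀ n z, g z ≤ gn n z := by
      intro n z
      exact le_of_tendsto (hgn₃ z) (Filter.eventually_atTop.2 ⟨n, fun m hm => hanti z hm⟩)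
    obtain ⟨n, hn⟩ := (Filter.tendsto_atTop'.1 (hgn₃ x)) (Set.Iio (g x + ε / 2))
      (Iio_mem_nhds (lt_add_of_pos_right _ (half_pos hε)))
    refine ⟨⟨gn n, (hgn₁ n).2⟩, ⟨(hgn₁ n).1, fun z => (hgf z).trans (hge n z)⟩, ?_⟩
    have h1 : gn n x < g x + ε / 2 := hn n le_rfl
    have : gn n x < F x + ε / 2 + ε / 2 := h1.trans_le (by linarith)
    simpa using this.trans_le (by linarith)
  haveI : Nonempty ↥S := hSne.to_subtype
  -- countable dense subset of S
  obtain ⟨T, hTc, hTd⟩ := TopologicalSpace.exists_countable_dense (↥S)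
  have hTne : T.Nonempty := hTd.nonempty.mono (by simp)
  obtain ⟨φ₀, hφ₀⟩ := hTc.exists_eq_range hTne
  set φ : ℕ → X → ℝ := fun n => ⇑((φ₀ n : ↥S) : C(X, ℝ)) with hφdef
  have hφC : ∀ n, φ n ∈ C := fun n => (φ₀ n).2.1
  have hφf : ∀ n z, f z ≤ φ n z := fun n => (φ₀ n).2.2
  set G := stmt0MinSeq φ with hGdef
  have hGC : ∀ n, G n ∈ C := by
    intro n
    induction n with
    | zero => exact hφC 0
    | succ n ih => exact hmin _ ih _ (hφC (n + 1))
  have hGanti : ∀ n x, G (n + 1) x ≤ G n x := fun n x => min_le_left _ _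
  have hGf : ∀ n z, f z ≤ G n z := by
    intro n
    induction n with
    | zero => exact hφf 0
    | succ n ih => exact fun z => le_min (ih z) (hφf (n + 1) z)
  have hGle : ∀ n x, G n x ≤ φ n x := by
    intro n x
    cases n with
    | zero => exact le_rfl
    | succ n => exact min_le_right _ _
  have hGanti' : ∀ x, Antitone fun n => G n x := fun x =>
    antitone_nat_of_succ_le fun n => hGanti n x
  -- F bounded
  have hFM : ∀ x, |F x| ≤ M := by
    intro x
    rw [abs_le]
    constructor
    · linarith [hfF x, (abs_le.1 (hM x)).1]
    · exact hFle _ (hconst M) hMf x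
  -- pointwise convergence
  have hconv : ∀ x, Tendsto (fun n => G n x) atTop (nhds (F x)) := by
    intro x
    have hbb : BddBelow (Set.range fun n => G n x) :=
      ⟨f x, by rintro y ⟨n, rfl⟩; exact hGf n x⟩
    have ht := tendsto_atTop_ciInf (hGanti' x) hbb
    have : (⨅ n, G n x) = F x := by
      apply le_antisymm
      · -- ≤ : via density
        refine le_of_forall_pos_le_add fun ε hε => ?_
        obtain ⟨h, hhS, hhx⟩ := hkey x (ε / 2) (half_pos hε)
        obtain ⟨t, htd, htT⟩ := Metric.dense_iff.1 hTd ⟨h, hhS⟩ (ε / 2) (half_pos hε)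
        rw [hφ₀] at htT
        obtain ⟨n, rfl⟩ := htT
        have hd : dist ((φ₀ n : ↥S) : C(X, ℝ)) h < ε / 2 := by
          simpa [Subtype.dist_eq] using htd
        have hdx : dist (φ n x) (h x) < ε / 2 :=
          lt_of_le_of_lt (ContinuousMap.dist_apply_le_dist x) hd
        have : φ n x < F x + ε := by
          have := abs_lt.1 (by simpa [Real.dist_eq] using hdx)
          linarith
        calc (⨅ n, G n x) ≤ G n x := ciInf_le hbb n
          _ ≤ φ n x := hGle n x
          _ ≤ F x + ε := this.le
      · exact le_ciInf fun n => hFle _ (hGC n) (hGf n) x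
    rwa [this] at ht
  exact hlim G hGC hGanti F ⟨M, hFM⟩ hconv
end

section
/- For any probability measure μ on a compact Polish space X and any cone C of test functions defining an integral stochastic order ⪯_C, the orbit K_μ := {ν ∈ Δ(X) : ν ⪯_C μ} is closed in the weak-* topology of Δ(X), and hence compact. -/
open MeasureTheory BoundedContinuousFunction Set Filter Topology TopologicalSpace
open scoped NNReal ENNReal

namespace RMK

variable {X : Type*} [MetricSpace X] [CompactSpace X]

/-- Make a bounded continuous `ℝ≥0`-valued function from a continuous one on a compact space. -/
noncomputable def nnbcf (f : X → ℝ≥0) (hf : Continuous f) : X →ᵇ ℝ≥0 :=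
  mkOfCompact ⟨f, hf⟩

@[simp] lemma nnbcf_apply (f : X → ℝ≥0) (hf : Continuous f) (x : X) :
    nnbcf f hf x = f x := rfl

variable (Λ : (X →ᵇ ℝ≥0) →ₗ[ℝ≥0] ℝ≥0)

lemma lam_mono {f g : X →ᵇ ℝ≥0} (h : ∀ x, f x ≤ g x) : Λ f ≤ Λ g := by
  have hc : Continuous fun x => g x - f x :=
    continuous_sub.comp (g.continuous.prodMk f.continuous)
  have hfg : f + nnbcf (fun x => g x - f x) hc = g := by
    ext x
    simp only [BoundedContinuousFunction.coe_add, Pi.add_apply, nnbcf_apply]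
    exact_mod_cast add_tsub_cancel_of_le (h x)
  calc Λ f ≤ Λ f + Λ (nnbcf (fun x => g x - f x) hc) := le_self_add
    _ = Λ (f + nnbcf (fun x => g x - f x) hc) := (map_add Λ _ _).symm
    _ = Λ g := by rw [hfg]

/-- The content `λ(K) = inf {Λ f | 1 ≤ f on K}` for `Λ` on bounded continuous functions. -/
noncomputable def rieszContentAux : Compacts X → ℝ≥0 := fun K =>
  sInf (Λ '' { f : X →ᵇ ℝ≥0 | ∀ x ∈ K, (1 : ℝ≥0) ≤ f x })

theorem rieszContentAux_image_nonempty (K : Compacts X) :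
    (Λ '' { f : X →ᵇ ℝ≥0 | ∀ x ∈ K, (1 : ℝ≥0) ≤ f x }).Nonempty :=
  ⟨Λ 1, 1, fun x _ => le_of_eq (by simp), rfl⟩

theorem rieszContentAux_mono {K₁ K₂ : Compacts X} (h : K₁ ≤ K₂) :
    rieszContentAux Λ K₁ ≤ rieszContentAux Λ K₂ :=
  csInf_le_csInf (OrderBot.bddBelow _) (rieszContentAux_image_nonempty Λ K₂)
    (Set.image_mono fun _ hf x hx => hf x (h hx))

theorem rieszContentAux_le {K : Compacts X} {f : X →ᵇ ℝ≥0} (h : ∀ x ∈ K, (1 : ℝ≥0) ≤ f x) :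
    rieszContentAux Λ K ≤ Λ f :=
  csInf_le (OrderBot.bddBelow _) ⟨f, ⟨h, rfl⟩⟩

theorem exists_lt_rieszContentAux_add_pos (K : Compacts X) {ε : ℝ≥0} (εpos : 0 < ε) :
    ∃ f : X →ᵇ ℝ≥0, (∀ x ∈ K, (1 : ℝ≥0) ≤ f x) ∧ Λ f < rieszContentAux Λ K + ε := by
  obtain ⟨α, ⟨⟨f, f_hyp⟩, α_hyp⟩⟩ :=
    exists_lt_of_csInf_lt (rieszContentAux_image_nonempty Λ K)
      (lt_add_of_pos_right (rieszContentAux Λ K) εpos)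
  refine ⟨f, f_hyp.left, ?_⟩
  rw [f_hyp.right]
  exact α_hyp

theorem rieszContentAux_sup_le (K1 K2 : Compacts X) :
    rieszContentAux Λ (K1 ⊔ K2) ≤ rieszContentAux Λ K1 + rieszContentAux Λ K2 := by
  apply _root_.le_of_forall_pos_le_add
  intro ε εpos
  obtain ⟨f1, f_test_function_K1⟩ := exists_lt_rieszContentAux_add_pos Λ K1 (half_pos εpos)
  obtain ⟨f2, f_test_function_K2⟩ := exists_lt_rieszContentAux_add_pos Λ K2 (half_pos εpos)
  have f_test_function_union : ∀ x ∈ K1 ⊔ K2, (1 : ℝ≥0) ≤ (f1 + f2) x := by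
    rintro x (x_in_K1 | x_in_K2)
    · exact le_add_right (f_test_function_K1.left x x_in_K1)
    · exact le_add_left (f_test_function_K2.left x x_in_K2)
  apply (rieszContentAux_le Λ f_test_function_union).trans (le_of_lt _)
  rw [map_add]
  apply lt_of_lt_of_le (_root_.add_lt_add f_test_function_K1.right f_test_function_K2.right)
    (le_of_eq _)
  rw [add_assoc, add_comm (ε / 2), add_assoc, add_halves ε, add_assoc]

/-- Urysohn bump: `1` on `K`, `≤ 1`, vanishing outside a compact subset of `U`. -/
lemma exists_bump {K U : Set X} (hK : IsClosed K) (hU : IsOpen U) (hKU : K ⊆ U) :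
    ∃ φ : X →ᵇ ℝ≥0, (∀ x ∈ K, φ x = 1) ∧ (∀ x, φ x ≤ 1) ∧
      ∃ C : Compacts X, (C : Set X) ⊆ U ∧ ∀ x ∉ (C : Set X), φ x = 0 := by
  obtain ⟨V, hVopen, hKV, hVU⟩ := normal_exists_closure_subset hK hU hKU
  obtain ⟨u, hu0, hu1, hu01⟩ := exists_continuous_zero_one_of_isClosed
    (isClosed_compl_iff.2 hVopen) hK (disjoint_compl_left_iff.2 hKV)
  have hc : Continuous fun x => Real.toNNReal (u x) :=
    continuous_real_toNNReal.comp u.continuous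
  refine ⟨nnbcf _ hc, ?_, ?_, ⟨closure V, isClosed_closure.isCompact⟩, hVU, ?_⟩
  · intro x hx
    simp [hu1 hx]
  · intro x
    simpa using Real.toNNReal_le_one.2 (hu01 x).2
  · intro x hx
    have : x ∈ Vᶜ := fun hxV => hx (subset_closure hxV)
    simp [hu0 this]

/-- A function `≤ 1` vanishing outside a compact `C` is dominated by the content of `C`. -/
lemma lam_le_aux {φ : X →ᵇ ℝ≥0} (C : Compacts X) (hle : ∀ x, φ x ≤ 1)
    (hsupp : ∀ x ∉ (C : Set X), φ x = 0) : Λ φ ≤ rieszContentAux Λ C := by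
  apply le_csInf (rieszContentAux_image_nonempty Λ C)
  rintro b ⟨f, hf, rfl⟩
  apply lam_mono
  intro x
  by_cases hx : x ∈ (C : Set X)
  · exact (hle x).trans (hf x hx)
  · simp [hsupp x hx]

lemma aux_sup_disjoint (K1 K2 : Compacts X) (h : Disjoint (K1 : Set X) (K2 : Set X)) :
    rieszContentAux Λ (K1 ⊔ K2) = rieszContentAux Λ K1 + rieszContentAux Λ K2 := by
  refine le_antisymm (rieszContentAux_sup_le Λ K1 K2) ?_
  apply le_csInf (rieszContentAux_image_nonempty Λ (K1 ⊔ K2))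
  rintro b ⟨F, hF, rfl⟩
  obtain ⟨u, hu0, hu1, hu01⟩ := exists_continuous_zero_one_of_isClosed
    K2.isCompact.isClosed K1.isCompact.isClosed h.symm
  have hp : Continuous fun x => Real.toNNReal (u x) :=
    continuous_real_toNNReal.comp u.continuous
  set p : X → ℝ≥0 := fun x => Real.toNNReal (u x) with hpdef
  have hp1 : ∀ x, p x ≤ 1 := fun x => Real.toNNReal_le_one.2 (hu01 x).2
  have hc1 : Continuous fun x => F x * p x := F.continuous.mul hp
  have hc2 : Continuous fun x => F x * (1 - p x) :=
    F.continuous.mul (continuous_sub.comp (continuous_const.prodMk hp))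
  have hsum : nnbcf _ hc1 + nnbcf _ hc2 = F := by
    ext x
    simp only [BoundedContinuousFunction.coe_add, Pi.add_apply, nnbcf_apply]
    have : F x * p x + F x * (1 - p x) = F x := by
      rw [← mul_add, add_tsub_cancel_of_le (hp1 x), mul_one]
    exact_mod_cast this
  have h1 : rieszContentAux Λ K1 ≤ Λ (nnbcf _ hc1) := by
    apply rieszContentAux_le
    intro x hx
    have : p x = 1 := by simp [hpdef, hu1 hx]
    simpa [this] using hF x (Or.inl hx)
  have h2 : rieszContentAux Λ K2 ≤ Λ (nnbcf _ hc2) := by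
    apply rieszContentAux_le
    intro x hx
    have : p x = 0 := by simp [hpdef, hu0 hx]
    simpa [this] using hF x (Or.inr hx)
  calc rieszContentAux Λ K1 + rieszContentAux Λ K2 ≤ Λ (nnbcf _ hc1) + Λ (nnbcf _ hc2) :=
        add_le_add h1 h2
    _ = Λ F := by rw [← map_add, hsum]

/-- The Riesz content associated to `Λ`. -/
noncomputable def rieszContent : Content X where
  toFun := rieszContentAux Λ
  mono' _ _ h := rieszContentAux_mono Λ h
  sup_disjoint' K1 K2 h _ _ := aux_sup_disjoint Λ K1 K2 h
  sup_le' := rieszContentAux_sup_le Λ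


lemma exists_forall_le (f : X →ᵇ ℝ≥0) : ∃ M : ℝ≥0, ∀ x, f x ≤ M := by
  rcases (Set.range fun x => f x).eq_empty_or_nonempty with h | h
  · refine ⟨0, fun x => ?_⟩
    exact absurd (Set.mem_range_self (f := fun x => f x) x) (by simp [h])
  · obtain ⟨M, hM⟩ := (isCompact_range f.continuous).exists_isGreatest h
    exact ⟨M, fun x => hM.2 ⟨x, rfl⟩⟩

lemma filter_lt_eq (N : ℕ) {δ : ℝ≥0} (hδ : δ ≠ 0) (c : ℝ≥0) :
    (Finset.range N).filter (fun i : ℕ => (i : ℝ≥0) * δ < c) = Finset.range (min N ⌈c / δ⌉₊) := by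
  ext i
  simp only [Finset.mem_filter, Finset.mem_range, lt_min_iff]
  have : (i : ℝ≥0) * δ < c ↔ i < ⌈c / δ⌉₊ := by
    rw [Nat.lt_ceil, lt_div_iff₀ (pos_iff_ne_zero.2 hδ)]
  tauto

lemma filter_le_eq (N : ℕ) {δ : ℝ≥0} (hδ : δ ≠ 0) (c : ℝ≥0) :
    (Finset.range N).filter (fun i : ℕ => ((i : ℝ≥0) + 1) * δ ≤ c) = Finset.range (min N ⌊c / δ⌋₊) := by
  ext i
  simp only [Finset.mem_filter, Finset.mem_range, lt_min_iff]
  have : ((i : ℝ≥0) + 1) * δ ≤ c ↔ i < ⌊c / δ⌋₊ := by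
    rw [Nat.lt_iff_add_one_le, Nat.le_floor_iff zero_le,
      ← le_div_iff₀ (pos_iff_ne_zero.2 hδ)]
    push_cast
    rfl
  tauto



section MeasurePart
variable [MeasurableSpace X] [BorelSpace X]

/-- The Riesz measure associated to `Λ`. -/
noncomputable def rmkMeasure : Measure X := (rieszContent Λ).measure

lemma rmk_open {U : Set X} (hU : IsOpen U) :
    rmkMeasure Λ U = (rieszContent Λ).innerContent ⟨U, hU⟩ := by
  rw [rmkMeasure, Content.measure_apply _ hU.measurableSet]
  exact (rieszContent Λ).outerMeasure_of_isOpen U hU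

lemma aux_le_lam_one (K : Compacts X) : rieszContentAux Λ K ≤ Λ 1 :=
  rieszContentAux_le Λ (fun x _ => by simp)

lemma rmk_univ_le : rmkMeasure Λ univ ≤ (Λ 1 : ℝ≥0∞) := by
  rw [rmk_open Λ isOpen_univ]
  exact iSup₂_le fun K _ => ENNReal.coe_le_coe.2 (aux_le_lam_one Λ K)

lemma rmk_prob (h1 : Λ 1 = 1) : IsProbabilityMeasure (rmkMeasure Λ) := by
  constructor
  refine le_antisymm (by simpa [h1] using rmk_univ_le Λ) ?_
  have h2 : (1 : ℝ≥0) ≤ rieszContentAux Λ ⟨univ, isCompact_univ⟩ := by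
    apply le_csInf (rieszContentAux_image_nonempty Λ _)
    rintro b ⟨g, hg, rfl⟩
    calc (1 : ℝ≥0) = Λ 1 := h1.symm
      _ ≤ Λ g := lam_mono Λ (fun x => by simpa using hg x trivial)
  rw [rmk_open Λ isOpen_univ]
  calc (1 : ℝ≥0∞) ≤ ((rieszContentAux Λ ⟨univ, isCompact_univ⟩ : ℝ≥0) : ℝ≥0∞) := by
        exact_mod_cast h2
    _ ≤ (rieszContent Λ).innerContent ⟨univ, isOpen_univ⟩ :=
        (rieszContent Λ).le_innerContent ⟨univ, isCompact_univ⟩ ⟨univ, isOpen_univ⟩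
          (subset_univ _)

end MeasurePart

section Main
variable [MeasurableSpace X] [BorelSpace X]

theorem rmk_lintegral (f : X →ᵇ ℝ≥0) :
    ∫⁻ x, (f x : ℝ≥0∞) ∂(rmkMeasure Λ) = (Λ f : ℝ≥0∞) := by
  classical
  obtain ⟨M, hM⟩ := exists_forall_le f
  have key : ∀ δ : ℝ≥0, δ ≠ 0 →
      (∫⁻ x, (f x : ℝ≥0∞) ∂(rmkMeasure Λ) ≤ (Λ f : ℝ≥0∞) + (δ : ℝ≥0∞) * (Λ 1 : ℝ≥0∞)) ∧
      ((Λ f : ℝ≥0∞) ≤ ∫⁻ x, (f x : ℝ≥0∞) ∂(rmkMeasure Λ)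
        + (δ : ℝ≥0∞) * (Λ 1 : ℝ≥0∞) + (δ : ℝ≥0∞) * (Λ 1 : ℝ≥0∞)) := by
    intro δ hδ
    have hδpos : 0 < δ := pos_iff_ne_zero.2 hδ
    set N : ℕ := ⌈M / δ⌉₊ with hNdef
    have hdivN : ∀ x, f x / δ ≤ (N : ℝ≥0) := by
      intro x
      have h1 : f x / δ ≤ M / δ := by gcongr; exact hM x
      exact h1.trans (Nat.le_ceil _)
    have hceil : ∀ x, min N ⌈f x / δ⌉₊ = ⌈f x / δ⌉₊ :=
      fun x => min_eq_right (Nat.ceil_le.2 (hdivN x))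
    have hfloor : ∀ x, min N ⌊f x / δ⌋₊ = ⌊f x / δ⌋₊ :=
      fun x => min_eq_right ((Nat.floor_le_ceil _).trans (Nat.ceil_le.2 (hdivN x)))
    have countA : ∀ x, f x ≤ δ * ((⌈f x / δ⌉₊ : ℕ) : ℝ≥0) := by
      intro x
      calc f x = f x / δ * δ := (div_mul_cancel₀ _ hδ).symm
        _ ≤ (⌈f x / δ⌉₊ : ℝ≥0) * δ := mul_le_mul_left (Nat.le_ceil _) δ
        _ = δ * (⌈f x / δ⌉₊ : ℝ≥0) := mul_comm _ _
    have countB : ∀ x, δ * ((⌈f x / δ⌉₊ : ℕ) : ℝ≥0) ≤ f x + δ := by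
      intro x
      calc δ * ((⌈f x / δ⌉₊ : ℕ) : ℝ≥0) ≤ δ * (f x / δ + 1) :=
            mul_le_mul_right (le_of_lt (Nat.ceil_lt_add_one zero_le)) δ
        _ = δ * (f x / δ) + δ := by rw [mul_add, mul_one]
        _ = f x + δ := by rw [mul_comm δ, div_mul_cancel₀ _ hδ]
    have countC : ∀ x, f x ≤ δ + δ * ((⌊f x / δ⌋₊ : ℕ) : ℝ≥0) := by
      intro x
      have h1 : f x / δ < (⌊f x / δ⌋₊ : ℝ≥0) + 1 := Nat.lt_floor_add_one _
      calc f x = f x / δ * δ := (div_mul_cancel₀ _ hδ).symm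
        _ ≤ ((⌊f x / δ⌋₊ : ℝ≥0) + 1) * δ := mul_le_mul_left h1.le δ
        _ = δ + δ * (⌊f x / δ⌋₊ : ℝ≥0) := by ring
    set U : ℕ → Set X := fun i => {x | (i : ℝ≥0) * δ < f x} with hUdef
    have hUopen : ∀ i, IsOpen (U i) := fun i => isOpen_lt continuous_const f.continuous
    have hUmeas : ∀ i, MeasurableSet (U i) := fun i => (hUopen i).measurableSet
    set T : ℝ≥0∞ := ∑ i ∈ Finset.range N, rmkMeasure Λ (U i) with hTdef
    have sumIf : ∀ x, (∑ i ∈ Finset.range N, if (i : ℝ≥0) * δ < f x then (δ : ℝ≥0∞) else 0)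
        = (δ : ℝ≥0∞) * ((⌈f x / δ⌉₊ : ℕ) : ℝ≥0∞) := by
      intro x
      rw [← Finset.sum_filter, filter_lt_eq N hδ (f x), Finset.sum_const,
        Finset.card_range, hceil x, nsmul_eq_mul, mul_comm]
    have sumIfNN : ∀ x, (∑ i ∈ Finset.range N, if (i : ℝ≥0) * δ < f x then (δ : ℝ≥0) else 0)
        = δ * ((⌈f x / δ⌉₊ : ℕ) : ℝ≥0) := by
      intro x
      rw [← Finset.sum_filter, filter_lt_eq N hδ (f x), Finset.sum_const,
        Finset.card_range, hceil x, nsmul_eq_mul, mul_comm]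
    have indic : ∀ i x, (U i).indicator (fun _ => (δ : ℝ≥0∞)) x
        = if (i : ℝ≥0) * δ < f x then (δ : ℝ≥0∞) else 0 := by
      intro i x
      simp only [Set.indicator_apply, hUdef, Set.mem_setOf_eq]
    have hSumInt : ∫⁻ x, (∑ i ∈ Finset.range N,
        if (i : ℝ≥0) * δ < f x then (δ : ℝ≥0∞) else 0) ∂(rmkMeasure Λ)
        = (δ : ℝ≥0∞) * T := by
      simp_rw [← indic]
      rw [lintegral_finset_sum _ (fun i _ => measurable_const.indicator (hUmeas i))]
      simp_rw [lintegral_indicator_const (hUmeas _)]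
      rw [hTdef, Finset.mul_sum]
    -- A' : ∫⁻ f ≤ δ T
    have hA : ∫⁻ x, (f x : ℝ≥0∞) ∂(rmkMeasure Λ) ≤ (δ : ℝ≥0∞) * T := by
      rw [← hSumInt]
      apply lintegral_mono
      intro x
      dsimp only
      rw [sumIf x]
      have h7 := ENNReal.coe_le_coe.2 (countA x)
      push_cast at h7 ⊢
      exact h7
    -- D' : δ T ≤ ∫⁻ f + δ Λ1
    have hD : (δ : ℝ≥0∞) * T ≤ ∫⁻ x, (f x : ℝ≥0∞) ∂(rmkMeasure Λ)
        + (δ : ℝ≥0∞) * (Λ 1 : ℝ≥0∞) := by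
      rw [← hSumInt]
      calc ∫⁻ x, (∑ i ∈ Finset.range N,
            if (i : ℝ≥0) * δ < f x then (δ : ℝ≥0∞) else 0) ∂(rmkMeasure Λ)
          ≤ ∫⁻ x, ((f x : ℝ≥0∞) + (δ : ℝ≥0∞)) ∂(rmkMeasure Λ) := by
            apply lintegral_mono
            intro x
            dsimp only
            rw [sumIf x]
            have h7 := ENNReal.coe_le_coe.2 (countB x)
            push_cast at h7 ⊢
            exact h7
        _ = ∫⁻ x, (f x : ℝ≥0∞) ∂(rmkMeasure Λ) + (δ : ℝ≥0∞) * rmkMeasure Λ univ := by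
            rw [lintegral_add_right _ measurable_const, lintegral_const]
        _ ≤ _ := add_le_add_right (mul_le_mul_right (rmk_univ_le Λ) _) _
    -- C' : Λ f ≤ δ Λ1 + δ T
    have hC : (Λ f : ℝ≥0∞) ≤ (δ : ℝ≥0∞) * (Λ 1 : ℝ≥0∞) + (δ : ℝ≥0∞) * T := by
      set F : ℕ → Set X := fun i => {x | ((i : ℝ≥0) + 1) * δ ≤ f x} with hFdef
      have hFclosed : ∀ i, IsClosed (F i) := fun i => isClosed_le continuous_const f.continuous
      have hFU : ∀ i, F i ⊆ U i := by
        intro i x hx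
        have h1 : (i : ℝ≥0) * δ < ((i : ℝ≥0) + 1) * δ :=
          mul_lt_mul_of_pos_right (lt_add_one _) hδpos
        exact lt_of_lt_of_le h1 hx
      have hbump : ∀ i : ℕ, ∃ φ : X →ᵇ ℝ≥0, (∀ x ∈ F i, φ x = 1) ∧ (∀ x, φ x ≤ 1) ∧
          ∃ C : Compacts X, (C : Set X) ⊆ U i ∧ ∀ x ∉ (C : Set X), φ x = 0 :=
        fun i => exists_bump (hFclosed i) (hUopen i) (hFU i)
      choose ψ hψ1 hψle Cs hCsU hψ0 using hbump
      have hpt : ∀ x, f x ≤ (δ • (1 : X →ᵇ ℝ≥0) + ∑ i ∈ Finset.range N, δ • ψ i) x := by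
        intro x
        have e1 : (δ • (1 : X →ᵇ ℝ≥0) + ∑ i ∈ Finset.range N, δ • ψ i) x
            = δ + ∑ i ∈ Finset.range N, δ * ψ i x := by
          simp [smul_eq_mul]
        rw [e1]
        have hcount : δ * ((⌊f x / δ⌋₊ : ℕ) : ℝ≥0) ≤ ∑ i ∈ Finset.range N, δ * ψ i x := by
          have e2 : δ * ((⌊f x / δ⌋₊ : ℕ) : ℝ≥0)
              = ∑ i ∈ Finset.range N, (if ((i : ℝ≥0) + 1) * δ ≤ f x then (δ : ℝ≥0) else 0) := by
            rw [← Finset.sum_filter, filter_le_eq N hδ (f x), Finset.sum_const,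
              Finset.card_range, hfloor x, nsmul_eq_mul, mul_comm]
          rw [e2]
          apply Finset.sum_le_sum
          intro i _
          by_cases hxF : x ∈ F i
          · have hxF' : ((i : ℝ≥0) + 1) * δ ≤ f x := hxF
            rw [if_pos hxF', hψ1 i x hxF, mul_one]
          · have hxF' : ¬ (((i : ℝ≥0) + 1) * δ ≤ f x) := hxF
            rw [if_neg hxF']
            exact zero_le
        calc f x ≤ δ + δ * ((⌊f x / δ⌋₊ : ℕ) : ℝ≥0) := countC x
          _ ≤ δ + ∑ i ∈ Finset.range N, δ * ψ i x := add_le_add_right hcount δ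
      have hΛle : Λ f ≤ δ * Λ 1 + ∑ i ∈ Finset.range N, δ * Λ (ψ i) := by
        have h3 := lam_mono Λ hpt
        rw [map_add, _root_.map_smul, smul_eq_mul,
          map_sum Λ _ (Finset.range N)] at h3
        simp_rw [_root_.map_smul, smul_eq_mul] at h3
        exact h3
      have hψμ : ∀ i ∈ Finset.range N,
          (δ : ℝ≥0∞) * (Λ (ψ i) : ℝ≥0∞) ≤ (δ : ℝ≥0∞) * rmkMeasure Λ (U i) := by
        intro i _
        apply mul_le_mul_right
        have h1 : Λ (ψ i) ≤ rieszContentAux Λ (Cs i) := lam_le_aux Λ (Cs i) (hψle i) (hψ0 i)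
        have h2 : ((rieszContentAux Λ (Cs i) : ℝ≥0) : ℝ≥0∞) ≤ rmkMeasure Λ (U i) := by
          rw [rmk_open Λ (hUopen i)]
          exact (rieszContent Λ).le_innerContent (Cs i) ⟨U i, hUopen i⟩ (hCsU i)
        exact le_trans (ENNReal.coe_le_coe.2 h1) h2
      calc (Λ f : ℝ≥0∞)
          ≤ ((δ * Λ 1 + ∑ i ∈ Finset.range N, δ * Λ (ψ i) : ℝ≥0) : ℝ≥0∞) :=
            ENNReal.coe_le_coe.2 hΛle
        _ = (δ : ℝ≥0∞) * (Λ 1 : ℝ≥0∞)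
            + ∑ i ∈ Finset.range N, (δ : ℝ≥0∞) * (Λ (ψ i) : ℝ≥0∞) := by
            push_cast
            rfl
        _ ≤ (δ : ℝ≥0∞) * (Λ 1 : ℝ≥0∞)
            + ∑ i ∈ Finset.range N, (δ : ℝ≥0∞) * rmkMeasure Λ (U i) :=
            add_le_add_right (Finset.sum_le_sum hψμ) _
        _ = (δ : ℝ≥0∞) * (Λ 1 : ℝ≥0∞) + (δ : ℝ≥0∞) * T := by
            rw [hTdef, Finset.mul_sum]
    -- B' : δ T ≤ Λ f + δ Λ1
    have hB : (δ : ℝ≥0∞) * T ≤ (Λ f : ℝ≥0∞) + (δ : ℝ≥0∞) * (Λ 1 : ℝ≥0∞) := by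
      apply ENNReal.le_of_forall_pos_le_add
      intro ε hε _
      set ε0 : ℝ≥0 := ε / (δ * N + 1) with hε0def
      have hden : (δ * (N : ℝ≥0) + 1 : ℝ≥0) ≠ 0 := by
        intro h
        simpa using congrArg (· + (0:ℝ≥0)) h
      have hε0 : ε0 ≠ 0 := div_ne_zero (ne_of_gt hε) hden
      have hinner : ∀ i, (rieszContent Λ).innerContent ⟨U i, hUopen i⟩ ≠ ∞ := by
        intro i
        have h1 := (rieszContent Λ).innerContent_le ⟨U i, hUopen i⟩ ⟨univ, isCompact_univ⟩
          (subset_univ _)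
        exact ne_top_of_le_ne_top ENNReal.coe_ne_top h1
      have hex : ∀ i : ℕ, ∃ K : Compacts X, (K : Set X) ⊆ U i ∧
          (rieszContent Λ).innerContent ⟨U i, hUopen i⟩ ≤ (rieszContent Λ) K + ε0 :=
        fun i => (rieszContent Λ).innerContent_exists_compact (hinner i) hε0
      choose K hKU hKap using hex
      have hbump : ∀ i : ℕ, ∃ φ : X →ᵇ ℝ≥0, (∀ x ∈ (K i : Set X), φ x = 1) ∧ (∀ x, φ x ≤ 1) ∧
          ∃ C : Compacts X, (C : Set X) ⊆ U i ∧ ∀ x ∉ (C : Set X), φ x = 0 :=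
        fun i => exists_bump (K i).isCompact.isClosed (hUopen i) (hKU i)
      choose φ hφ1 hφle Cs hCsU hφ0 using hbump
      have hpt : ∀ x, (∑ i ∈ Finset.range N, δ • φ i) x ≤ (f + δ • (1 : X →ᵇ ℝ≥0)) x := by
        intro x
        have e1 : (∑ i ∈ Finset.range N, δ • φ i) x = ∑ i ∈ Finset.range N, δ * φ i x := by
          simp [smul_eq_mul]
        have e2 : (f + δ • (1 : X →ᵇ ℝ≥0)) x = f x + δ := by simp [smul_eq_mul]
        rw [e1, e2]
        have h3 : ∑ i ∈ Finset.range N, δ * φ i x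
            ≤ ∑ i ∈ Finset.range N, (if (i : ℝ≥0) * δ < f x then (δ : ℝ≥0) else 0) := by
          apply Finset.sum_le_sum
          intro i _
          by_cases hx : x ∈ U i
          · have hx' : (i : ℝ≥0) * δ < f x := hx
            rw [if_pos hx']
            calc δ * φ i x ≤ δ * 1 := mul_le_mul_right (hφle i x) δ
              _ = δ := mul_one δ
          · have hx' : ¬ ((i : ℝ≥0) * δ < f x) := hx
            rw [if_neg hx']
            have h4 : φ i x = 0 := hφ0 i x (fun hCmem => hx (hCsU i hCmem))
            simp [h4]
        calc ∑ i ∈ Finset.range N, δ * φ i x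
            ≤ ∑ i ∈ Finset.range N, (if (i : ℝ≥0) * δ < f x then (δ : ℝ≥0) else 0) := h3
          _ = δ * ((⌈f x / δ⌉₊ : ℕ) : ℝ≥0) := sumIfNN x
          _ ≤ f x + δ := countB x
      have hg : Λ (∑ i ∈ Finset.range N, δ • φ i) ≤ Λ f + δ * Λ 1 := by
        have h3 := lam_mono Λ hpt
        rwa [map_add, _root_.map_smul, smul_eq_mul] at h3
      have hgsum : Λ (∑ i ∈ Finset.range N, δ • φ i) = ∑ i ∈ Finset.range N, δ * Λ (φ i) := by
        rw [map_sum Λ _ (Finset.range N)]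
        exact Finset.sum_congr rfl fun i _ => by rw [_root_.map_smul, smul_eq_mul]
      have hμU : ∀ i ∈ Finset.range N,
          rmkMeasure Λ (U i) ≤ (Λ (φ i) : ℝ≥0∞) + (ε0 : ℝ≥0∞) := by
        intro i _
        rw [rmk_open Λ (hUopen i)]
        refine (hKap i).trans ?_
        have h5 : rieszContentAux Λ (K i) ≤ Λ (φ i) :=
          rieszContentAux_le Λ (fun x hx => (hφ1 i x hx).ge)
        exact add_le_add_left (ENNReal.coe_le_coe.2 h5) _
      have hNε : ((N : ℝ≥0∞)) * ((δ : ℝ≥0∞) * (ε0 : ℝ≥0∞)) ≤ (ε : ℝ≥0∞) := by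
        have h6 : (N : ℝ≥0) * (δ * ε0) ≤ ε := by
          calc (N : ℝ≥0) * (δ * ε0) = (δ * N) * ε0 := by ring
            _ ≤ (δ * N + 1) * ε0 := mul_le_mul_left le_self_add _
            _ = ε := by rw [hε0def, mul_comm (δ * (N:ℝ≥0) + 1), div_mul_cancel₀ _ hden]
        calc ((N : ℝ≥0∞)) * ((δ : ℝ≥0∞) * (ε0 : ℝ≥0∞))
            = (((N : ℝ≥0) * (δ * ε0) : ℝ≥0) : ℝ≥0∞) := by push_cast; rfl
          _ ≤ (ε : ℝ≥0∞) := ENNReal.coe_le_coe.2 h6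
      calc (δ : ℝ≥0∞) * T = ∑ i ∈ Finset.range N, (δ : ℝ≥0∞) * rmkMeasure Λ (U i) := by
            rw [hTdef, Finset.mul_sum]
        _ ≤ ∑ i ∈ Finset.range N, (δ : ℝ≥0∞) * ((Λ (φ i) : ℝ≥0∞) + (ε0 : ℝ≥0∞)) :=
            Finset.sum_le_sum (fun i hi => mul_le_mul_right (hμU i hi) _)
        _ = (∑ i ∈ Finset.range N, (δ : ℝ≥0∞) * (Λ (φ i) : ℝ≥0∞))
            + (N : ℝ≥0∞) * ((δ : ℝ≥0∞) * (ε0 : ℝ≥0∞)) := by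
            simp_rw [mul_add]
            rw [Finset.sum_add_distrib, Finset.sum_const, Finset.card_range, nsmul_eq_mul]
        _ ≤ ((Λ f : ℝ≥0∞) + (δ : ℝ≥0∞) * (Λ 1 : ℝ≥0∞)) + (ε : ℝ≥0∞) := by
            apply add_le_add _ hNε
            calc ∑ i ∈ Finset.range N, (δ : ℝ≥0∞) * (Λ (φ i) : ℝ≥0∞)
                = ((∑ i ∈ Finset.range N, δ * Λ (φ i) : ℝ≥0) : ℝ≥0∞) := by push_cast; rfl
              _ = ((Λ (∑ i ∈ Finset.range N, δ • φ i) : ℝ≥0) : ℝ≥0∞) := by rw [hgsum]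
              _ ≤ ((Λ f + δ * Λ 1 : ℝ≥0) : ℝ≥0∞) := ENNReal.coe_le_coe.2 hg
              _ = (Λ f : ℝ≥0∞) + (δ : ℝ≥0∞) * (Λ 1 : ℝ≥0∞) := by push_cast; rfl
    exact ⟨hA.trans hB, by
      calc (Λ f : ℝ≥0∞) ≤ (δ : ℝ≥0∞) * (Λ 1 : ℝ≥0∞) + (δ : ℝ≥0∞) * T := hC
        _ ≤ (δ : ℝ≥0∞) * (Λ 1 : ℝ≥0∞) + (∫⁻ x, (f x : ℝ≥0∞) ∂(rmkMeasure Λ)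
            + (δ : ℝ≥0∞) * (Λ 1 : ℝ≥0∞)) := add_le_add_right hD _
        _ = ∫⁻ x, (f x : ℝ≥0∞) ∂(rmkMeasure Λ) + (δ : ℝ≥0∞) * (Λ 1 : ℝ≥0∞)
            + (δ : ℝ≥0∞) * (Λ 1 : ℝ≥0∞) := by ring⟩
  apply le_antisymm
  · apply ENNReal.le_of_forall_pos_le_add
    intro ε hε _
    have hden : (Λ 1 + 1 : ℝ≥0) ≠ 0 := by
      intro h
      simpa using congrArg (· + (0:ℝ≥0)) h
    set δ : ℝ≥0 := ε / (Λ 1 + 1) with hδdef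
    have hδ : δ ≠ 0 := div_ne_zero (ne_of_gt hε) hden
    refine ((key δ hδ).1).trans ?_
    have h2 : δ * Λ 1 ≤ ε := by
      calc δ * Λ 1 ≤ δ * (Λ 1 + 1) := mul_le_mul_right le_self_add δ
        _ = ε := by rw [hδdef, div_mul_cancel₀ _ hden]
    exact add_le_add_right (by exact_mod_cast ENNReal.coe_le_coe.2 h2) _
  · apply ENNReal.le_of_forall_pos_le_add
    intro ε hε _
    have hden : (Λ 1 + Λ 1 + 1 : ℝ≥0) ≠ 0 := by
      intro h
      simpa using congrArg (· + (0:ℝ≥0)) h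
    set δ : ℝ≥0 := ε / (Λ 1 + Λ 1 + 1) with hδdef
    have hδ : δ ≠ 0 := div_ne_zero (ne_of_gt hε) hden
    refine ((key δ hδ).2).trans ?_
    have h2 : δ * Λ 1 + δ * Λ 1 ≤ ε := by
      calc δ * Λ 1 + δ * Λ 1 = δ * (Λ 1 + Λ 1) := by ring
        _ ≤ δ * (Λ 1 + Λ 1 + 1) := mul_le_mul_right le_self_add δ
        _ = ε := by rw [hδdef, div_mul_cancel₀ _ hden]
    calc ∫⁻ x, (f x : ℝ≥0∞) ∂(rmkMeasure Λ) + (δ : ℝ≥0∞) * (Λ 1 : ℝ≥0∞)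
          + (δ : ℝ≥0∞) * (Λ 1 : ℝ≥0∞)
        = ∫⁻ x, (f x : ℝ≥0∞) ∂(rmkMeasure Λ)
          + ((δ * Λ 1 + δ * Λ 1 : ℝ≥0) : ℝ≥0∞) := by push_cast; ring
      _ ≤ ∫⁻ x, (f x : ℝ≥0∞) ∂(rmkMeasure Λ) + (ε : ℝ≥0∞) :=
          add_le_add_right (ENNReal.coe_le_coe.2 h2) _

end Main

section Compactness

variable {Y : Type*} [MetricSpace Y] [CompactSpace Y] [MeasurableSpace Y] [BorelSpace Y]

lemma lintegral_bcf_ne_top (f : Y →ᵇ ℝ≥0) (ν : Measure Y) [IsProbabilityMeasure ν] :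
    ∫⁻ x, (f x : ℝ≥0∞) ∂ν ≠ ∞ := by
  obtain ⟨M, hM⟩ := exists_forall_le f
  have h1 : ∫⁻ x, (f x : ℝ≥0∞) ∂ν ≤ (M : ℝ≥0∞) := by
    calc ∫⁻ x, (f x : ℝ≥0∞) ∂ν ≤ ∫⁻ _, (M : ℝ≥0∞) ∂ν :=
          lintegral_mono (fun x => ENNReal.coe_le_coe.2 (hM x))
      _ = (M : ℝ≥0∞) := by simp
  exact ne_top_of_le_ne_top ENNReal.coe_ne_top h1

/-- The lower integral of a bounded continuous `ℝ≥0`-valued function, as `ℝ≥0`. -/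
noncomputable def nnint (f : Y →ᵇ ℝ≥0) (ν : ProbabilityMeasure Y) : ℝ≥0 :=
  (∫⁻ x, (f x : ℝ≥0∞) ∂(ν : Measure Y)).toNNReal

lemma nnint_coe (f : Y →ᵇ ℝ≥0) (ν : ProbabilityMeasure Y) :
    ((nnint f ν : ℝ≥0) : ℝ≥0∞) = ∫⁻ x, (f x : ℝ≥0∞) ∂(ν : Measure Y) :=
  ENNReal.coe_toNNReal (lintegral_bcf_ne_top f _)

lemma nnint_add (f g : Y →ᵇ ℝ≥0) (ν : ProbabilityMeasure Y) :
    nnint (f + g) ν = nnint f ν + nnint g ν := by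
  have h1 : ∫⁻ x, ((f + g) x : ℝ≥0∞) ∂(ν : Measure Y)
      = ∫⁻ x, (f x : ℝ≥0∞) ∂(ν : Measure Y) + ∫⁻ x, (g x : ℝ≥0∞) ∂(ν : Measure Y) := by
    simp_rw [BoundedContinuousFunction.coe_add, Pi.add_apply, ENNReal.coe_add]
    exact lintegral_add_left f.continuous.measurable.coe_nnreal_ennreal _
  have h2 := congrArg ENNReal.toNNReal h1
  rwa [ENNReal.toNNReal_add (lintegral_bcf_ne_top f _) (lintegral_bcf_ne_top g _)] at h2

lemma nnint_smul (c : ℝ≥0) (f : Y →ᵇ ℝ≥0) (ν : ProbabilityMeasure Y) :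
    nnint (c • f) ν = c * nnint f ν := by
  have h1 : ∫⁻ x, ((c • f) x : ℝ≥0∞) ∂(ν : Measure Y)
      = (c : ℝ≥0∞) * ∫⁻ x, (f x : ℝ≥0∞) ∂(ν : Measure Y) := by
    have e : ∀ x, (((c • f) x : ℝ≥0) : ℝ≥0∞) = (c : ℝ≥0∞) * (f x : ℝ≥0∞) := by
      intro x
      push_cast
      congr 1
    simp_rw [e]
    exact lintegral_const_mul _ f.continuous.measurable.coe_nnreal_ennreal
  have h2 := congrArg ENNReal.toNNReal h1
  rwa [ENNReal.toNNReal_mul, ENNReal.toNNReal_coe] at h2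

lemma nnint_one (ν : ProbabilityMeasure Y) : nnint (1 : Y →ᵇ ℝ≥0) ν = 1 := by
  have h1 : ∫⁻ x, ((1 : Y →ᵇ ℝ≥0) x : ℝ≥0∞) ∂(ν : Measure Y) = 1 := by simp
  rw [nnint, h1]
  rfl

lemma nnint_le (f : Y →ᵇ ℝ≥0) {M : ℝ≥0} (hM : ∀ x, f x ≤ M) (ν : ProbabilityMeasure Y) :
    nnint f ν ≤ M := by
  have h1 : ∫⁻ x, (f x : ℝ≥0∞) ∂(ν : Measure Y) ≤ (M : ℝ≥0∞) := by
    calc ∫⁻ x, (f x : ℝ≥0∞) ∂(ν : Measure Y) ≤ ∫⁻ _, (M : ℝ≥0∞) ∂(ν : Measure Y) :=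
          lintegral_mono (fun x => ENNReal.coe_le_coe.2 (hM x))
      _ = (M : ℝ≥0∞) := by simp
  have h2 : ((nnint f ν : ℝ≥0) : ℝ≥0∞) ≤ (M : ℝ≥0∞) := by rw [nnint_coe]; exact h1
  exact_mod_cast h2

/-- Real integral of a real BCF against a probability measure, via the `ℝ≥0` machinery. -/
lemma integral_eq_nnint (g : Y →ᵇ ℝ) (ν : ProbabilityMeasure Y) :
    ∫ x, g x ∂(ν : Measure Y)
      = ((nnint (g + BoundedContinuousFunction.const Y ‖g‖).nnrealPart ν : ℝ≥0) : ℝ) - ‖g‖ := by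
  set h := (g + BoundedContinuousFunction.const Y ‖g‖).nnrealPart with hh
  have hcoe : ∀ x, ((h x : ℝ≥0) : ℝ) = g x + ‖g‖ := by
    intro x
    have h1 : (h x : ℝ≥0) = Real.toNNReal (g x + ‖g‖) := rfl
    rw [h1, Real.coe_toNNReal]
    have := abs_le.1 (g.norm_coe_le_norm x)
    linarith [this.1]
  have h2 : ((nnint h ν : ℝ≥0) : ℝ) = ∫ x, ((h x : ℝ≥0) : ℝ) ∂(ν : Measure Y) := by
    have h3 := h.toReal_lintegral_coe_eq_integral (ν : Measure Y)
    rw [nnint]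
    rw [← h3]
    rfl
  rw [h2]
  have h4 : ∫ x, ((h x : ℝ≥0) : ℝ) ∂(ν : Measure Y) = ∫ x, (g x + ‖g‖) ∂(ν : Measure Y) := by
    congr 1
    ext x
    exact hcoe x
  rw [h4, integral_add (g.integrable _) (integrable_const _)]
  simp

/-- **Compactness of the space of probability measures** on a compact metric space. -/
theorem compactSpace_probabilityMeasure : CompactSpace (ProbabilityMeasure Y) := by
  constructor
  rw [isCompact_iff_ultrafilter_le_nhds]
  intro F _
  -- limits along the ultrafilter
  have ex : ∀ f : Y →ᵇ ℝ≥0, ∃ l : ℝ≥0, Tendsto (fun ν => nnint f ν) (F : Filter _) (nhds l) := by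
    intro f
    obtain ⟨M, hM⟩ := exists_forall_le f
    have hmem : ∀ ν : ProbabilityMeasure Y, nnint f ν ∈ Set.Icc (0 : ℝ≥0) M :=
      fun ν => ⟨zero_le, nnint_le f hM ν⟩
    obtain ⟨l, -, hl⟩ := isCompact_Icc.ultrafilter_le_nhds (F.map (fun ν => nnint f ν))
      (le_principal_iff.2 (Filter.mem_map.2 (Eventually.of_forall hmem)))
    exact ⟨l, by rwa [Ultrafilter.coe_map] at hl⟩
  choose lim hlim using ex
  have hadd : ∀ f g : Y →ᵇ ℝ≥0, lim (f + g) = lim f + lim g := by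
    intro f g
    refine tendsto_nhds_unique (hlim (f + g)) ?_
    have h1 := (hlim f).add (hlim g)
    refine h1.congr (fun ν => ?_)
    exact (nnint_add f g ν).symm
  have hsmul : ∀ (c : ℝ≥0) (f : Y →ᵇ ℝ≥0), lim (c • f) = c * lim f := by
    intro c f
    refine tendsto_nhds_unique (hlim (c • f)) ?_
    have h1 := (hlim f).const_mul c
    refine h1.congr (fun ν => ?_)
    exact (nnint_smul c f ν).symm
  set Λ : (Y →ᵇ ℝ≥0) →ₗ[ℝ≥0] ℝ≥0 :=
    { toFun := lim
      map_add' := hadd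
      map_smul' := fun c f => hsmul c f } with hΛdef
  have hΛ1 : Λ 1 = 1 := by
    refine tendsto_nhds_unique (hlim 1) ?_
    have h1 : (fun ν : ProbabilityMeasure Y => nnint 1 ν) = fun _ => (1 : ℝ≥0) := by
      funext ν
      exact nnint_one ν
    rw [h1]
    exact tendsto_const_nhds
  haveI hPM : IsProbabilityMeasure (rmkMeasure Λ) := rmk_prob Λ hΛ1
  set P : ProbabilityMeasure Y := ⟨rmkMeasure Λ, hPM⟩ with hPdef
  refine ⟨P, trivial, ?_⟩
  have hnnP : ∀ f : Y →ᵇ ℝ≥0, nnint f P = Λ f := by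
    intro f
    have h1 : ∫⁻ x, (f x : ℝ≥0∞) ∂(P : Measure Y) = (Λ f : ℝ≥0∞) := rmk_lintegral Λ f
    rw [nnint, h1, ENNReal.toNNReal_coe]
  have hmain : Tendsto (fun ν : ProbabilityMeasure Y => ν) (F : Filter _) (nhds P) := by
    rw [ProbabilityMeasure.tendsto_iff_forall_integral_tendsto]
    intro g
    have h2 : ∀ ν : ProbabilityMeasure Y, ∫ x, g x ∂(ν : Measure Y)
        = ((nnint (g + BoundedContinuousFunction.const Y ‖g‖).nnrealPart ν : ℝ≥0) : ℝ) - ‖g‖ :=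
      fun ν => integral_eq_nnint g ν
    simp_rw [h2]
    apply Tendsto.sub_const
    apply NNReal.tendsto_coe.2
    rw [hnnP]
    exact hlim _
  exact hmain

end Compactness

end RMK

open MeasureTheory Filter Topology

/-- For any probability measure `μ` on a compact Polish space `X` and any
cone `C` of test functions defining an integral stochastic order, the orbit
`K_μ = {ν : ν ⪯_C μ}` is closed in the weak-* topology of `Δ(X)`, hence compact. -/
theorem stmt_2 {X : Type*} [MetricSpace X] [CompactSpace X] [SecondCountableTopology X]
    [MeasurableSpace X] [BorelSpace X]
    (C : Set (X → ℝ))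
    (hbdd : ∀ g ∈ C, ∃ M : ℝ, ∀ x, |g x| ≤ M)
    (husc : ∀ g ∈ C, UpperSemicontinuous g)
    (happrox : ∀ g ∈ C, ∃ gn : ℕ → X → ℝ,
      (∀ n, gn n ∈ C ∧ Continuous (gn n)) ∧
      (∀ n x, gn (n + 1) x ≤ gn n x) ∧
      (∀ x, Tendsto (fun n => gn n x) atTop (nhds (g x))))
    (μ : ProbabilityMeasure X) :
    IsClosed {ν : ProbabilityMeasure X |
        ∀ g ∈ C, ∫ x, g x ∂(ν : Measure X) ≤ ∫ x, g x ∂(μ : Measure X)} ∧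
    IsCompact {ν : ProbabilityMeasure X |
        ∀ g ∈ C, ∫ x, g x ∂(ν : Measure X) ≤ ∫ x, g x ∂(μ : Measure X)} := by
  classical
  have hclosed : IsClosed {ν : ProbabilityMeasure X |
      ∀ g ∈ C, ∫ x, g x ∂(ν : Measure X) ≤ ∫ x, g x ∂(μ : Measure X)} := by
    have hSeq : {ν : ProbabilityMeasure X |
          ∀ g ∈ C, ∫ x, g x ∂(ν : Measure X) ≤ ∫ x, g x ∂(μ : Measure X)}
        = ⋂ (g : {g : X → ℝ // g ∈ C ∧ Continuous g}),
          {ν : ProbabilityMeasure X |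
            ∫ x, (g : X → ℝ) x ∂(ν : Measure X) ≤ ∫ x, (g : X → ℝ) x ∂(μ : Measure X)} := by
      ext ν
      simp only [Set.mem_iInter, Set.mem_setOf_eq]
      constructor
      · rintro hν ⟨g, hgC, hgcont⟩
        exact hν g hgC
      · intro hν g hgC
        obtain ⟨gn, hgn_mem, hgn_dec, hgn_tendsto⟩ := happrox g hgC
        obtain ⟨M0, hM0⟩ := hbdd (gn 0) (hgn_mem 0).1
        obtain ⟨Mg, hMg⟩ := hbdd g hgC
        have hanti : ∀ x, Antitone fun n => gn n x :=
          fun x => antitone_nat_of_succ_le (fun n => hgn_dec n x)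
        have hlow : ∀ n x, g x ≤ gn n x := by
          intro n x
          apply le_of_tendsto (hgn_tendsto x)
          filter_upwards [eventually_ge_atTop n] with m hm
          exact hanti x hm
        have hbound : ∀ n x, ‖gn n x‖ ≤ max M0 Mg := by
          intro n x
          rw [Real.norm_eq_abs, abs_le]
          constructor
          · have h1 : -Mg ≤ g x := (abs_le.1 (hMg x)).1
            have h2 : g x ≤ gn n x := hlow n x
            have h3 : -(max M0 Mg) ≤ -Mg := neg_le_neg (le_max_right _ _)
            linarith
          · have h1 : gn n x ≤ gn 0 x := hanti x (Nat.zero_le n)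
            have h2 : gn 0 x ≤ M0 := (abs_le.1 (hM0 x)).2
            exact le_trans (h1.trans h2) (le_max_left _ _)
        have hDCT : ∀ (ξ : Measure X), IsProbabilityMeasure ξ →
            Tendsto (fun n => ∫ x, gn n x ∂ξ) atTop (nhds (∫ x, g x ∂ξ)) := by
          intro ξ hξ
          apply tendsto_integral_of_dominated_convergence (fun _ => max M0 Mg)
          · exact fun n => (hgn_mem n).2.aestronglyMeasurable
          · exact integrable_const _
          · exact fun n => Eventually.of_forall (hbound n)
          · exact Eventually.of_forall hgn_tendsto
        have h1 := hDCT (ν : Measure X) inferInstance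
        have h2 := hDCT (μ : Measure X) inferInstance
        exact le_of_tendsto_of_tendsto' h1 h2
          (fun n => hν ⟨gn n, (hgn_mem n).1, (hgn_mem n).2⟩)
    rw [hSeq]
    apply isClosed_iInter
    rintro ⟨g, hgC, hgcont⟩
    have hcont : Continuous fun ν : ProbabilityMeasure X => ∫ x, g x ∂(ν : Measure X) :=
      MeasureTheory.ProbabilityMeasure.continuous_integral_boundedContinuousFunction
        (BoundedContinuousFunction.mkOfCompact ⟨g, hgcont⟩)
    exact isClosed_le hcont continuous_const
  haveI := RMK.compactSpace_probabilityMeasure (Y := X)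
  exact ⟨hclosed, hclosed.isCompact⟩
end

section
/- Let C be a convex cone of functions on X. If ν is an extreme point of K_μ = {ν : ν ⪯_C μ} and ν = P1*μ = P2*μ for two order-preserving kernels P1, P2 (P_i*δ_x ⪯_C δ_x μ-a.e.), then P1(·|x) = P2(·|x) for μ-almost every x. (Unique rationalization of extreme points.) -/
open MeasureTheory ProbabilityTheory Filter Topology
open scoped ENNReal

/-- The orbit `K_μ = {ν ∈ Δ(X) : ν ⪯_C μ}`. -/
def orbit {X : Type*} [MeasurableSpace X] (C : Set (X → ℝ)) (μ : Measure X) :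
    Set (Measure X) :=
  {ν | IsProbabilityMeasure ν ∧ ∀ g ∈ C, ∫ x, g x ∂ν ≤ ∫ x, g x ∂μ}

/-- Convex combination `t•μ + (1-t)•ν` of measures. -/
noncomputable def mix {X : Type*} [MeasurableSpace X] (t : ℝ) (μ ν : Measure X) :
    Measure X :=
  ENNReal.ofReal t • μ + ENNReal.ofReal (1 - t) • ν

/-- `μ` is an extreme point of the set `S` of measures. -/
def IsExtremeIn {X : Type*} [MeasurableSpace X] (S : Set (Measure X)) (μ : Measure X) :
    Prop :=
  μ ∈ S ∧ ∀ t ∈ Set.Ioo (0 : ℝ) 1, ∀ μ₁ ∈ S, ∀ μ₂ ∈ S,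
    μ = mix t μ₁ μ₂ → μ₁ = μ ∧ μ₂ = μ


lemma aux_integrable {X : Type*} [MeasurableSpace X] (ρ : Measure X) [IsProbabilityMeasure ρ]
    {g : X → ℝ} (hg : Measurable g) {M : ℝ} (hM : ∀ x, |g x| ≤ M) : Integrable g ρ :=
  ⟨hg.aestronglyMeasurable, HasFiniteIntegral.of_bounded (C := M) (ae_of_all _ hM)⟩

lemma aux_int_eq {X : Type*} [MeasurableSpace X] (ρ : Measure X) [IsProbabilityMeasure ρ]
    {g : X → ℝ} (hg : Measurable g) {M : ℝ} (hM : ∀ x, |g x| ≤ M) :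
    ∫ x, g x ∂ρ = (∫⁻ x, ENNReal.ofReal (g x + M) ∂ρ).toReal - M := by
  have hint : Integrable g ρ := aux_integrable ρ hg hM
  have hint2 : Integrable (fun x => g x + M) ρ := hint.add (integrable_const M)
  have hnn : 0 ≤ᵐ[ρ] fun x => g x + M :=
    ae_of_all _ fun x => by have := (abs_le.1 (hM x)).1; simp only [Pi.zero_apply]; linarith
  rw [← ofReal_integral_eq_lintegral_ofReal hint2 hnn, integral_add hint (integrable_const M),
    integral_const]
  simp only [probReal_univ, ENNReal.toReal_one, smul_eq_mul, one_mul]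
  rw [ENNReal.toReal_ofReal]
  · ring
  · have h := integral_nonneg_of_ae hnn
    rw [integral_add hint (integrable_const M), integral_const] at h
    simp only [probReal_univ, ENNReal.toReal_one, smul_eq_mul, one_mul] at h
    linarith

lemma aux_bind_le {X : Type*} [MeasurableSpace X] (μ : Measure X) [IsProbabilityMeasure μ]
    (Q : Kernel X X) [IsMarkovKernel Q] {g : X → ℝ} (hg : Measurable g) {M : ℝ}
    (hM : ∀ x, |g x| ≤ M) (hle : ∀ᵐ x ∂μ, ∫ y, g y ∂(Q x) ≤ g x) :
    ∫ y, g y ∂(μ.bind (fun x => Q x)) ≤ ∫ x, g x ∂μ := by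
  have hprob : IsProbabilityMeasure (μ.bind (fun x => Q x)) := by
    constructor
    rw [Measure.bind_apply MeasurableSet.univ Q.measurable.aemeasurable]
    simp
  have hfm : Measurable fun y => ENNReal.ofReal (g y + M) :=
    (hg.add measurable_const).ennreal_ofReal
  have hbound : ∫⁻ x, ENNReal.ofReal (g x + M) ∂μ ≤ ENNReal.ofReal (M + M) := by
    calc ∫⁻ y, ENNReal.ofReal (g y + M) ∂μ ≤ ∫⁻ _, ENNReal.ofReal (M + M) ∂μ :=
          lintegral_mono fun y => ENNReal.ofReal_le_ofReal
            (by linarith [(abs_le.1 (hM y)).2])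
      _ = ENNReal.ofReal (M + M) := by simp
  have hlin : ∫⁻ y, ENNReal.ofReal (g y + M) ∂(μ.bind (fun x => Q x))
      ≤ ∫⁻ x, ENNReal.ofReal (g x + M) ∂μ := by
    rw [Measure.lintegral_bind Q.measurable.aemeasurable hfm.aemeasurable]
    refine lintegral_mono_ae ?_
    filter_upwards [hle] with x hx
    have heq : ∫⁻ y, ENNReal.ofReal (g y + M) ∂(Q x) = ENNReal.ofReal (∫ y, g y + M ∂(Q x)) := by
      exact (ofReal_integral_eq_lintegral_ofReal (f := fun y => g y + M)
        ((aux_integrable _ hg hM).add (integrable_const M))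
        (ae_of_all _ fun y => by have := (abs_le.1 (hM y)).1; dsimp; linarith)).symm
    rw [heq]
    refine ENNReal.ofReal_le_ofReal ?_
    rw [integral_add (aux_integrable _ hg hM) (integrable_const M), integral_const]
    simp only [probReal_univ, ENNReal.toReal_one, smul_eq_mul, one_mul]
    linarith
  rw [aux_int_eq _ hg hM, aux_int_eq _ hg hM]
  have hfin : ∫⁻ x, ENNReal.ofReal (g x + M) ∂μ ≠ ⊤ :=
    (lt_of_le_of_lt hbound ENNReal.ofReal_lt_top).ne
  exact sub_le_sub_right (ENNReal.toReal_mono hfin hlin) M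

lemma aux_prob {X : Type*} [MeasurableSpace X] (μ : Measure X) [IsProbabilityMeasure μ]
    (Q : Kernel X X) [IsMarkovKernel Q] : IsProbabilityMeasure (μ.bind (fun x => Q x)) := by
  constructor
  rw [Measure.bind_apply MeasurableSet.univ Q.measurable.aemeasurable]
  simp

lemma aux_null {X : Type*} [MeasurableSpace X]
    (C : Set (X → ℝ))
    (hC : ∀ g ∈ C, Measurable g ∧ ∃ M : ℝ, ∀ x, |g x| ≤ M)
    (μ ν : Measure X) [IsProbabilityMeasure μ] [IsProbabilityMeasure ν]
    (hext : IsExtremeIn (orbit C μ) ν)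
    (P₁ P₂ : Kernel X X) [IsMarkovKernel P₁] [IsMarkovKernel P₂]
    (h₁ : ν = μ.bind (fun x => P₁ x))
    (h₂ : ν = μ.bind (fun x => P₂ x))
    (hop₁ : ∀ᵐ x ∂μ, ∀ g ∈ C, ∫ y, g y ∂(P₁ x) ≤ g x)
    (hop₂ : ∀ᵐ x ∂μ, ∀ g ∈ C, ∫ y, g y ∂(P₂ x) ≤ g x)
    (B : Set X) (hB : MeasurableSet B) :
    μ {x | P₂ x B < P₁ x B} = 0 := by
  set A : Set X := {x | P₂ x B < P₁ x B} with hA_def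
  have hA : MeasurableSet A :=
    measurableSet_lt (P₂.measurable_coe hB) (P₁.measurable_coe hB)
  set Q₁ : Kernel X X := Kernel.piecewise hA P₁ P₂ with hQ₁
  set Q₂ : Kernel X X := Kernel.piecewise hA P₂ P₁ with hQ₂
  set ρ₁ : Measure X := μ.bind (fun x => Q₁ x) with hρ₁
  set ρ₂ : Measure X := μ.bind (fun x => Q₂ x) with hρ₂
  have hprob₁ : IsProbabilityMeasure ρ₁ := aux_prob μ Q₁
  have hprob₂ : IsProbabilityMeasure ρ₂ := aux_prob μ Q₂
  have hmem : ∀ (R S : Kernel X X) [IsMarkovKernel R] [IsMarkovKernel S],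
      (∀ᵐ x ∂μ, ∀ g ∈ C, ∫ y, g y ∂(R x) ≤ g x) →
      (∀ᵐ x ∂μ, ∀ g ∈ C, ∫ y, g y ∂(S x) ≤ g x) →
      μ.bind (fun x => (Kernel.piecewise hA R S) x) ∈ orbit C μ := by
    intro R S _ _ hR hS
    refine ⟨aux_prob μ _, fun g hg => ?_⟩
    obtain ⟨hgm, M, hM⟩ := hC g hg
    refine aux_bind_le μ _ hgm hM ?_
    filter_upwards [hR, hS] with x h1 h2
    rw [Kernel.piecewise_apply]
    split_ifs
    · exact h1 g hg
    · exact h2 g hg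
  have hmem₁ : ρ₁ ∈ orbit C μ := hmem P₁ P₂ hop₁ hop₂
  have hmem₂ : ρ₂ ∈ orbit C μ := hmem P₂ P₁ hop₂ hop₁
  have hsum : ∀ s : Set X, MeasurableSet s → ρ₁ s + ρ₂ s = ν s + ν s := by
    intro s hs
    rw [hρ₁, hρ₂, Measure.bind_apply hs Q₁.measurable.aemeasurable, Measure.bind_apply hs Q₂.measurable.aemeasurable,
      ← lintegral_add_left (Q₁.measurable_coe hs)]
    have : ∀ x, Q₁ x s + Q₂ x s = P₁ x s + P₂ x s := by
      intro x
      rw [hQ₁, hQ₂, Kernel.piecewise_apply', Kernel.piecewise_apply']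
      split_ifs
      · rfl
      · exact add_comm _ _
    simp_rw [this]
    have hν₁ : ν s = ∫⁻ x, P₁ x s ∂μ := by rw [h₁, Measure.bind_apply hs P₁.measurable.aemeasurable]
    have hν₂ : ν s = ∫⁻ x, P₂ x s ∂μ := by rw [h₂, Measure.bind_apply hs P₂.measurable.aemeasurable]
    rw [lintegral_add_left (P₁.measurable_coe hs)]
    nth_rewrite 2 [hν₂]
    rw [hν₁]
  have hmix : ν = mix (1/2) ρ₁ ρ₂ := by
    ext s hs
    have h12 : ENNReal.ofReal (1/2 : ℝ) = 2⁻¹ := by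
      rw [ENNReal.ofReal_div_of_pos (by norm_num)]
      norm_num
    simp only [mix, Measure.add_apply, Measure.smul_apply, smul_eq_mul]
    norm_num
    rw [h12, ← mul_add, hsum s hs, ← two_mul, ← mul_assoc,
      ENNReal.inv_mul_cancel two_ne_zero ENNReal.ofNat_ne_top, one_mul]
  have heq : ρ₁ = ν :=
    (hext.2 (1/2) ⟨by norm_num, by norm_num⟩ ρ₁ hmem₁ ρ₂ hmem₂ hmix).1
  -- evaluate at B
  set f : X → ℝ≥0∞ := fun x => P₁ x B with hf
  set g : X → ℝ≥0∞ := fun x => P₂ x B with hg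
  have hfm : Measurable f := P₁.measurable_coe hB
  have hgm : Measurable g := P₂.measurable_coe hB
  have hρB : ρ₁ B = ∫⁻ x in A, f x ∂μ + ∫⁻ x in Aᶜ, g x ∂μ := by
    rw [hρ₁, Measure.bind_apply hB Q₁.measurable.aemeasurable, ← lintegral_add_compl _ hA]
    congr 1
    · refine setLIntegral_congr_fun hA (fun x hx => ?_)
      rw [hQ₁, Kernel.piecewise_apply', if_pos hx]
    · refine setLIntegral_congr_fun hA.compl (fun x hx => ?_)
      rw [hQ₁, Kernel.piecewise_apply', if_neg hx]
  have hνB : ν B = ∫⁻ x in A, g x ∂μ + ∫⁻ x in Aᶜ, g x ∂μ := by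
    rw [h₂, Measure.bind_apply hB P₂.measurable.aemeasurable, ← lintegral_add_compl _ hA]
  have hfin : ∀ (s : Set X), ∫⁻ x in s, g x ∂μ ≠ ⊤ := by
    intro s
    have hle : ∫⁻ x in s, g x ∂μ ≤ ∫⁻ _ in s, (1 : ℝ≥0∞) ∂μ :=
      lintegral_mono fun x => prob_le_one
    rw [setLIntegral_one] at hle
    exact (hle.trans_lt (measure_lt_top μ s)).ne
  rw [heq] at hρB
  have hAB : ∫⁻ x in A, f x ∂μ = ∫⁻ x in A, g x ∂μ :=
    WithTop.add_right_cancel (hfin Aᶜ) (hρB.symm.trans hνB)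
  have hzero : ∫⁻ x in A, f x - g x ∂μ = 0 := by
    rw [lintegral_sub hgm (hfin A)
      (ae_restrict_of_forall_mem hA fun x hx => le_of_lt hx), hAB, tsub_self]
  have hae : (fun x => f x - g x) =ᵐ[μ.restrict A] 0 :=
    (lintegral_eq_zero_iff (hfm.sub hgm)).mp hzero
  rw [Filter.EventuallyEq, ae_restrict_iff' hA] at hae
  refine measure_eq_zero_iff_ae_notMem.mpr ?_
  filter_upwards [hae] with x hx hxA
  have h0 : f x - g x = 0 := by simpa using hx hxA
  exact absurd (tsub_eq_zero_iff_le.mp h0) (not_le.mpr hxA)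

lemma aux_countable_gpi {α : Type*} {S : Set (Set α)} (hS : S.Countable) :
    (generatePiSystem S).Countable := by
  have h : generatePiSystem S ⊆ (Set.sInter '' {t | t.Finite ∧ t ⊆ S}) := by
    intro s hs
    induction hs with
    | base h => exact ⟨{_}, ⟨Set.finite_singleton _, Set.singleton_subset_iff.2 h⟩, by simp⟩
    | inter h1 h2 hne ih1 ih2 =>
      obtain ⟨t1, ⟨hf1, hs1⟩, rfl⟩ := ih1
      obtain ⟨t2, ⟨hf2, hs2⟩, rfl⟩ := ih2
      exact ⟨t1 ∪ t2, ⟨hf1.union hf2, Set.union_subset hs1 hs2⟩, Set.sInter_union t1 t2⟩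
  exact ((Set.countable_setOf_finite_subset hS).image _).mono h


/-- Unique rationalization of extreme points: if `ν` is an extreme point of
the orbit `K_μ` and `ν = P₁*μ = P₂*μ` for two order-preserving kernels, then
`P₁(·|x) = P₂(·|x)` for μ-almost every `x`. -/

theorem stmt_8 {X : Type*} [MetricSpace X] [CompactSpace X] [SecondCountableTopology X]
    [MeasurableSpace X] [BorelSpace X]
    (C : Set (X → ℝ))
    (hadd : ∀ g₁ ∈ C, ∀ g₂ ∈ C, g₁ + g₂ ∈ C)
    (hsmul : ∀ c : ℝ, 0 ≤ c → ∀ g ∈ C, c • g ∈ C)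
    (hC : ∀ g ∈ C, Measurable g ∧ ∃ M : ℝ, ∀ x, |g x| ≤ M)
    (hmin : ∀ g₁ ∈ C, ∀ g₂ ∈ C, (fun x => min (g₁ x) (g₂ x)) ∈ C)
    (μ ν : Measure X) [IsProbabilityMeasure μ] [IsProbabilityMeasure ν]
    (hext : IsExtremeIn (orbit C μ) ν)
    (P₁ P₂ : Kernel X X) [IsMarkovKernel P₁] [IsMarkovKernel P₂]
    (h₁ : ν = μ.bind (fun x => P₁ x))
    (h₂ : ν = μ.bind (fun x => P₂ x))
    (hop₁ : ∀ᵐ x ∂μ, ∀ g ∈ C, ∫ y, g y ∂(P₁ x) ≤ g x)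
    (hop₂ : ∀ᵐ x ∂μ, ∀ g ∈ C, ∫ y, g y ∂(P₂ x) ≤ g x) :
    ∀ᵐ x ∂μ, P₁ x = P₂ x := by
  have hnull : ∀ B : Set X, MeasurableSet B → (∀ᵐ x ∂μ, P₁ x B = P₂ x B) := by
    intro B hB
    have hn₁ : μ {x | P₂ x B < P₁ x B} = 0 :=
      aux_null C hC μ ν hext P₁ P₂ h₁ h₂ hop₁ hop₂ B hB
    have hn₂ : μ {x | P₁ x B < P₂ x B} = 0 :=
      aux_null C hC μ ν hext P₂ P₁ h₂ h₁ hop₂ hop₁ B hB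
    filter_upwards [measure_eq_zero_iff_ae_notMem.mp hn₁, measure_eq_zero_iff_ae_notMem.mp hn₂]
      with x hx1 hx2
    exact le_antisymm (not_lt.mp hx1) (not_lt.mp hx2)
  set T : Set (Set X) := generatePiSystem (TopologicalSpace.countableBasis X) with hT
  have hTc : T.Countable := aux_countable_gpi (TopologicalSpace.countable_countableBasis X)
  have hgen : (inferInstance : MeasurableSpace X) = MeasurableSpace.generateFrom T := by
    rw [hT, generateFrom_generatePiSystem_eq,
      ← (TopologicalSpace.isBasis_countableBasis X).borel_eq_generateFrom]
    exact BorelSpace.measurable_eq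
  have hTm : ∀ s ∈ T, MeasurableSet s := by
    intro s hs
    induction hs with
    | base h =>
      exact ((TopologicalSpace.isBasis_countableBasis X).isOpen h).measurableSet
    | inter h1 h2 hne ih1 ih2 => exact ih1.inter ih2
  have hae : ∀ᵐ x ∂μ, ∀ s ∈ T, P₁ x s = P₂ x s :=
    (ae_ball_iff hTc).mpr fun s hs => hnull s (hTm s hs)
  filter_upwards [hae] with x hx
  refine ext_of_generate_finite T hgen (isPiSystem_generatePiSystem _) hx ?_
  simp
end

section
/- Let f: X → ℝ on a compact convex X ⊂ ℝⁿ be continuous, let f̄ be its concave envelope, and let h be a supporting affine function of f̄ at a point x where f̄ is differentiable. Define R_h := {y ∈ X : f̄(y) = h(y)} and T_h := {y ∈ X : f(y) = h(y)}. Then R_h is convex, T_h ⊆ R_h, and R_h = conv(T_h). -/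
open Filter Topology

open Function in

lemma sum_extend_aux {ι κ M : Type*} [Fintype ι] [Fintype κ] [AddCommMonoid M]
    (e : ι ↪ κ) (u : ι → M) : ∑ i, Function.extend e u 0 i = ∑ j, u j := by
  classical
  calc ∑ i, Function.extend e u 0 i
      = ∑ i ∈ Finset.univ.image e, Function.extend e u 0 i := by
        refine (Finset.sum_subset (Finset.subset_univ _) fun i _ hi => ?_).symm
        rw [Function.extend_apply' u (0 : κ → M) i]
        · rfl
        · rintro ⟨a, rfl⟩
          exact hi (Finset.mem_image.2 ⟨a, Finset.mem_univ a, rfl⟩)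
    _ = ∑ j, u j := by
        rw [Finset.sum_image (fun a _ b _ hab => e.injective hab)]
        simp [e.injective.extend_apply]

lemma isCompact_convexHull_aux {E : Type*} [NormedAddCommGroup E] [NormedSpace ℝ E]
    [FiniteDimensional ℝ E] {s : Set E} (hs : IsCompact s) :
    IsCompact (convexHull ℝ s) := by
  classical
  rcases s.eq_empty_or_nonempty with rfl | ⟨z₀, hz₀⟩
  · simpa [convexHull_empty] using isCompact_empty
  · set m := Module.finrank ℝ E + 1 with hm
    have himg : convexHull ℝ s =
        (fun wp : (Fin m → ℝ) × (Fin m → E) => ∑ i, wp.1 i • wp.2 i) ''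
          (stdSimplex ℝ (Fin m) ×ˢ Set.univ.pi fun _ => s) := by
      apply Set.Subset.antisymm
      · intro y hy
        obtain ⟨ι, hfin, p, w, hrange, hai, hpos, hsum, heq⟩ :=
          eq_pos_convex_span_of_mem_convexHull hy
        
        have hcard : Fintype.card ι ≤ m := by
          refine hai.card_le_finrank_succ.trans ?_
          exact Nat.add_le_add_right (Submodule.finrank_le _) 1
        obtain ⟨e⟩ : Nonempty (ι ↪ Fin m) :=
          Function.Embedding.nonempty_of_card_le (by simpa using hcard)
        refine ⟨(Function.extend e w 0, Function.extend e p fun _ => z₀),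
          ⟨⟨fun i => ?_, ?_⟩, fun i _ => ?_⟩, ?_⟩
        · show (0:ℝ) ≤ Function.extend e w 0 i
          rcases em (∃ a, e a = i) with ⟨a, rfl⟩ | hne
          · rw [e.injective.extend_apply]; exact (hpos a).le
          · rw [Function.extend_apply' w (0 : Fin m → ℝ) i hne]; rfl
        · show ∑ i, Function.extend e w 0 i = 1
          rw [sum_extend_aux e w]; exact hsum
        · show Function.extend e p (fun _ => z₀) i ∈ s
          rcases em (∃ a, e a = i) with ⟨a, rfl⟩ | hne
          · rw [e.injective.extend_apply]; exact hrange ⟨a, rfl⟩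
          · rw [Function.extend_apply' p _ i hne]; exact hz₀
        · show ∑ i, Function.extend e w 0 i • Function.extend e p (fun _ => z₀) i = y
          have hfun : (fun i => Function.extend e w 0 i • Function.extend e p (fun _ => z₀) i)
              = Function.extend e (fun j => w j • p j) 0 := by
            funext i
            rcases em (∃ a, e a = i) with ⟨a, rfl⟩ | hne
            · rw [e.injective.extend_apply, e.injective.extend_apply, e.injective.extend_apply]
            · rw [Function.extend_apply' w (0 : Fin m → ℝ) i hne, Function.extend_apply' p _ i hne,
                Function.extend_apply' (fun j => w j • p j) (0 : Fin m → E) i hne, Pi.zero_apply, zero_smul]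
              rfl
          rw [show (∑ i, Function.extend e w 0 i • Function.extend e p (fun _ => z₀) i)
            = ∑ i, Function.extend e (fun j => w j • p j) 0 i from by rw [← hfun]]
          rw [sum_extend_aux e (fun j => w j • p j)]
          exact heq
      · rintro y ⟨⟨w, p⟩, ⟨⟨hw0, hw1⟩, hp⟩, rfl⟩
        have := Finset.centerMass_mem_convexHull Finset.univ (fun i _ => hw0 i)
          (by rw [hw1]; exact one_pos) (fun i _ => hp i (Set.mem_univ i))
        rwa [Finset.centerMass_eq_of_sum_1 _ _ hw1] at this
    rw [himg]
    exact ((isCompact_stdSimplex _ _).prod (isCompact_univ_pi fun _ => hs)).image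
      (continuous_finset_sum _ fun i _ =>
        ((continuous_apply i).comp continuous_fst).smul ((continuous_apply i).comp continuous_snd))


/-- The concave envelope of `f` over the set `X`: the pointwise infimum of all concave
functions on `X` dominating `f` on `X`. -/
noncomputable def concEnv {n : ℕ} (X : Set (EuclideanSpace ℝ (Fin n)))
    (f : EuclideanSpace ℝ (Fin n) → ℝ) : EuclideanSpace ℝ (Fin n) → ℝ :=
  fun z => sInf {y : ℝ | ∃ g : EuclideanSpace ℝ (Fin n) → ℝ,
    ConcaveOn ℝ X g ∧ (∀ w ∈ X, f w ≤ g w) ∧ y = g z}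

/-- For continuous `f` on a full-dimensional compact convex `X ⊆ ℝⁿ`, with
`f̄` its concave envelope and `h` the supporting affine function of `f̄` at a
differentiability point `x`, the sets `R_h := {y ∈ X : f̄(y) = h(y)}` and
`T_h := {y ∈ X : f(y) = h(y)}` satisfy: `R_h` is convex, `T_h ⊆ R_h`, and
`R_h = conv(T_h)`. -/
theorem stmt_12 {n : ℕ} (X : Set (EuclideanSpace ℝ (Fin n)))
    (hXc : IsCompact X) (hXconv : Convex ℝ X) (hXfull : (interior X).Nonempty)
    (f : EuclideanSpace ℝ (Fin n) → ℝ) (hfc : ContinuousOn f X)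
    (x : EuclideanSpace ℝ (Fin n)) (hx : x ∈ interior X)
    (hdiff : DifferentiableAt ℝ (concEnv X f) x)
    (h : EuclideanSpace ℝ (Fin n) → ℝ)
    (hh : h = fun y => concEnv X f x + fderiv ℝ (concEnv X f) x (y - x)) :
    Convex ℝ {y ∈ X | concEnv X f y = h y} ∧
    {y ∈ X | f y = h y} ⊆ {y ∈ X | concEnv X f y = h y} ∧
    {y ∈ X | concEnv X f y = h y} = convexHull ℝ {y ∈ X | f y = h y} := by
  classical
  set φ := concEnv X f with hφ
  set L := fderiv ℝ (concEnv X f) x with hLdef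
  set S : EuclideanSpace ℝ (Fin n) → Set ℝ := fun z =>
    {y : ℝ | ∃ g : EuclideanSpace ℝ (Fin n) → ℝ,
      ConcaveOn ℝ X g ∧ (∀ w ∈ X, f w ≤ g w) ∧ y = g z} with hS
  have hφS : ∀ z, φ z = sInf (S z) := fun z => rfl
  have hxX : x ∈ X := interior_subset hx
  obtain ⟨M, hM⟩ : ∃ M, ∀ w ∈ X, f w ≤ M := by
    obtain ⟨M, hM⟩ := hXc.exists_bound_of_continuousOn hfc
    exact ⟨M, fun w hw => (le_abs_self _).trans (by simpa using hM w hw)⟩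
  have hSne : ∀ z, (S z).Nonempty :=
    fun z => ⟨M, fun _ => M, concaveOn_const M hXconv, hM, rfl⟩
  have hSlb : ∀ z ∈ X, ∀ y ∈ S z, f z ≤ y := by
    rintro z hz y ⟨g, hg, hgf, rfl⟩; exact hgf z hz
  have hge : ∀ z ∈ X, f z ≤ φ z := fun z hz => le_csInf (hSne z) (hSlb z hz)
  have hbdd : ∀ z ∈ X, BddBelow (S z) := fun z hz => ⟨f z, fun y hy => hSlb z hz y hy⟩
  have hle : ∀ g : EuclideanSpace ℝ (Fin n) → ℝ, ConcaveOn ℝ X g → (∀ w ∈ X, f w ≤ g w) →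
      ∀ z ∈ X, φ z ≤ g z :=
    fun g hg hgf z hz => csInf_le (hbdd z hz) ⟨g, hg, hgf, rfl⟩
  have hconc : ConcaveOn ℝ X φ := by
    refine ⟨hXconv, fun a ha b hb ta tb hta htb hab => ?_⟩
    refine le_csInf (hSne _) ?_
    rintro y ⟨g, hg, hgf, rfl⟩
    calc ta • φ a + tb • φ b ≤ ta • g a + tb • g b :=
          add_le_add (smul_le_smul_of_nonneg_left (hle g hg hgf a ha) hta)
            (smul_le_smul_of_nonneg_left (hle g hg hgf b hb) htb)
      _ ≤ g (ta • a + tb • b) := hg.2 ha hb hta htb hab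
  -- tangent plane inequality
  have hsupp : ∀ y ∈ X, φ y ≤ h y := by
    intro y hy
    have hγ : HasDerivAt (fun t : ℝ => x + t • (y - x)) (y - x) 0 := by
      simpa using ((hasDerivAt_id (0:ℝ)).smul_const (y - x)).const_add x
    have hφx : HasFDerivAt φ L (x + (0:ℝ) • (y - x)) := by
      simpa using hdiff.hasFDerivAt
    have hline : HasDerivAt (fun t : ℝ => φ (x + t • (y - x))) (L (y - x)) 0 :=
      by have := hφx.comp_hasDerivAt 0 hγ; exact this
    rw [hasDerivAt_iff_tendsto_slope] at hline
    have hsub : Set.Ioi (0:ℝ) ⊆ {(0:ℝ)}ᶜ := fun t ht => ne_of_gt ht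
    have hlim := hline.mono_left (nhdsWithin_mono 0 hsub)
    have hev : ∀ᶠ t in 𝓝[>] (0:ℝ),
        φ y - φ x ≤ slope (fun t : ℝ => φ (x + t • (y - x))) 0 t := by
      filter_upwards [Ioo_mem_nhdsGT_of_mem (Set.left_mem_Ico.2 one_pos)] with t ht
      have hmemc : x + t • (y - x) = (1 - t) • x + t • y := by module
      have hcc := hconc.2 hxX hy (by linarith [ht.2] : (0:ℝ) ≤ 1 - t) ht.1.le
        (by ring : (1 - t) + t = 1)
      rw [slope_def_field, hmemc]
      have h0 : x + (0:ℝ) • (y - x) = x := by simp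
      rw [h0, sub_zero]
      rw [le_div_iff₀ ht.1]
      simp only [smul_eq_mul] at hcc
      nlinarith [hcc]
    have hfin := ge_of_tendsto hlim hev
    rw [hh]
    simp only [← hLdef, ← hφ]
    linarith
  have hhf : ∀ y ∈ X, f y ≤ h y := fun y hy => (hge y hy).trans (hsupp y hy)
  -- affine property of h along convex combinations
  have hLsum : ∀ (ι : Type) (t : Finset ι) (w : ι → ℝ) (q : ι → EuclideanSpace ℝ (Fin n))
      (z : EuclideanSpace ℝ (Fin n)), (∑ i ∈ t, w i = 1) → (∑ i ∈ t, w i • q i = z) →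
      ∑ i ∈ t, w i * h (q i) = h z := by
    intro ι t w q z hw1 hqz
    have hdiffsum : ∑ i ∈ t, w i • (q i - x) = z - x := by
      simp only [smul_sub, Finset.sum_sub_distrib, ← Finset.sum_smul, hw1, hqz, one_smul]
    calc ∑ i ∈ t, w i * h (q i) = ∑ i ∈ t, (w i * φ x + w i * L (q i - x)) := by
          rw [hh]; exact Finset.sum_congr rfl fun i _ => by simp only [← hφ, ← hLdef]; ring
      _ = (∑ i ∈ t, w i) * φ x + ∑ i ∈ t, L (w i • (q i - x)) := by
          rw [Finset.sum_add_distrib, ← Finset.sum_mul]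
          congr 1
          exact Finset.sum_congr rfl fun i _ => by rw [map_smul, smul_eq_mul]
      _ = φ x + L (z - x) := by rw [hw1, one_mul, ← map_sum, hdiffsum]
      _ = h z := by rw [hh]
  -- convexity of R
  have hRconv : Convex ℝ {y ∈ X | φ y = h y} := by
    rintro a ⟨haX, haR⟩ b ⟨hbX, hbR⟩ ta tb hta htb hab
    have hcX : ta • a + tb • b ∈ X := hXconv haX hbX hta htb hab
    refine ⟨hcX, le_antisymm (hsupp _ hcX) ?_⟩
    have haff : h (ta • a + tb • b) = ta * h a + tb * h b := by
      have := hLsum Bool {false, true} (fun i => if i then tb else ta)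
        (fun i => if i then b else a) (ta • a + tb • b) (by simp [hab]) (by simp)
      simpa [add_comm] using this.symm
    have := hconc.2 haX hbX hta htb hab
    simp only [smul_eq_mul] at this
    rw [haff]
    calc ta * h a + tb * h b = ta * φ a + tb * φ b := by rw [haR, hbR]
      _ ≤ φ (ta • a + tb • b) := this
  -- T ⊆ R
  have hTR : {y ∈ X | f y = h y} ⊆ {y ∈ X | φ y = h y} := by
    rintro y ⟨hyX, hyT⟩
    exact ⟨hyX, le_antisymm (hsupp y hyX) (hyT ▸ hge y hyX)⟩
  refine ⟨hRconv, hTR, Set.Subset.antisymm ?_ (convexHull_min hTR hRconv)⟩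
  -- hard direction
  set G : Set (EuclideanSpace ℝ (Fin n) × ℝ) := (fun y => (y, f y)) '' X with hGdef
  have hGcomp : IsCompact G := hXc.image_of_continuousOn (continuousOn_id.prodMk hfc)
  have hCcomp : IsCompact (convexHull ℝ G) := isCompact_convexHull_aux hGcomp
  have hslice : ∀ z : EuclideanSpace ℝ (Fin n), IsCompact {t : ℝ | (z, t) ∈ convexHull ℝ G} := by
    intro z
    have heq : {t : ℝ | (z, t) ∈ convexHull ℝ G}
        = Prod.snd '' (convexHull ℝ G ∩ Prod.fst ⁻¹' {z}) := by
      ext t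
      constructor
      · intro ht; exact ⟨(z, t), ⟨ht, rfl⟩, rfl⟩
      · rintro ⟨⟨a, b⟩, ⟨hm, ha⟩, rfl⟩
        have : a = z := ha
        subst this; exact hm
    rw [heq]
    exact ((hCcomp.inter_right (isClosed_singleton.preimage continuous_fst)).image
      continuous_snd)
  have hslice_ne : ∀ z ∈ X, f z ∈ {t : ℝ | (z, t) ∈ convexHull ℝ G} :=
    fun z hz => subset_convexHull ℝ G ⟨z, hz, rfl⟩
  set F : EuclideanSpace ℝ (Fin n) → ℝ := fun z => sSup {t : ℝ | (z, t) ∈ convexHull ℝ G}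
    with hFdef
  have hFmem : ∀ z ∈ X, (z, F z) ∈ convexHull ℝ G :=
    fun z hz => (hslice z).sSup_mem ⟨f z, hslice_ne z hz⟩
  have hFge : ∀ z ∈ X, f z ≤ F z :=
    fun z hz => le_csSup (hslice z).bddAbove (hslice_ne z hz)
  have hFconc : ConcaveOn ℝ X F := by
    refine ⟨hXconv, fun a ha b hb ta tb hta htb hab => ?_⟩
    have hcomb : (ta • a + tb • b, ta * F a + tb * F b) ∈ convexHull ℝ G := by
      have := (convex_convexHull ℝ G) (hFmem a ha) (hFmem b hb) hta htb hab
      simpa [Prod.ext_iff, smul_eq_mul] using this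
    have := le_csSup (hslice (ta • a + tb • b)).bddAbove hcomb
    simpa [smul_eq_mul] using this
  -- main inclusion
  rintro z ⟨hzX, hzR⟩
  have hFz : φ z ≤ F z := hle F hFconc (fun w hw => hFge w hw) z hzX
  have hmem := hFmem z hzX
  rw [convexHull_eq] at hmem
  obtain ⟨ι, t, w, p, hw0, hw1, hpG, hcm⟩ := hmem
  rw [Finset.centerMass_eq_of_sum_1 _ _ hw1] at hcm
  have hq : ∀ i ∈ t, (p i).1 ∈ X ∧ (p i).2 = f ((p i).1) := by
    intro i hi
    obtain ⟨y, hy, hpy⟩ := hpG i hi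
    rw [← hpy]; exact ⟨hy, rfl⟩
  have hfst : ∑ i ∈ t, w i • (p i).1 = z := by
    have h2 := congrArg Prod.fst hcm
    simp only [Prod.fst_sum, Prod.smul_fst] at h2
    exact h2
  have hsnd : ∑ i ∈ t, w i * f ((p i).1) = F z := by
    have h2 := congrArg Prod.snd hcm
    simp only [Prod.snd_sum, Prod.smul_snd, smul_eq_mul] at h2
    rw [← h2]
    exact Finset.sum_congr rfl fun i hi => by rw [(hq i hi).2]
  have hhz : ∑ i ∈ t, w i * h ((p i).1) = h z := hLsum ι t w (fun i => (p i).1) z hw1 hfst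
  have hterm : ∀ i ∈ t, 0 ≤ w i * (h ((p i).1) - f ((p i).1)) :=
    fun i hi => mul_nonneg (hw0 i hi) (sub_nonneg.2 (hhf _ (hq i hi).1))
  have hsum0 : ∑ i ∈ t, w i * (h ((p i).1) - f ((p i).1)) = 0 := by
    have h1 : ∑ i ∈ t, w i * (h ((p i).1) - f ((p i).1)) = h z - F z := by
      simp only [mul_sub, Finset.sum_sub_distrib, hhz, hsnd]
    have h3 : 0 ≤ ∑ i ∈ t, w i * (h ((p i).1) - f ((p i).1)) := Finset.sum_nonneg hterm
    have : h z - F z ≤ 0 := by rw [← hzR]; linarith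
    linarith
  have hzero := (Finset.sum_eq_zero_iff_of_nonneg hterm).1 hsum0
  have hcm' : t.centerMass w (fun i => (p i).1) = z := by
    rw [Finset.centerMass_eq_of_sum_1 _ _ hw1]; exact hfst
  rw [← hcm', ← Finset.centerMass_filter_ne_zero]
  apply Finset.centerMass_mem_convexHull
  · intro i hi; exact hw0 i (Finset.mem_filter.1 hi).1
  · rw [Finset.sum_filter_ne_zero, hw1]; exact one_pos
  · intro i hi
    obtain ⟨hit, hwne⟩ := Finset.mem_filter.1 hi
    have hz0 := hzero i hit
    have hfh : f ((p i).1) = h ((p i).1) := by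
      rcases mul_eq_zero.1 hz0 with h' | h'
      · exact absurd h' hwne
      · linarith
    exact ⟨(hq i hit).1, hfh⟩
end

section
/- Let X be a compact convex metrizable subset of a locally convex Hausdorff topological vector space and Y a metric space. If f: X × Y → ℝ is bounded, lower semicontinuous, and x ↦ f(x,y) is convex for every y ∈ Y, then there exists an increasing sequence of continuous functions f_n: X × Y → ℝ with f_n ≤ f, f_n ↑ f pointwise, and x ↦ f_n(x,y) convex for every y and n. Each f_n can be taken to be a finite maximum of functions of the form a(x) + φ(y) with a continuous affine on X and φ continuous on Y. -/
open Filter Topology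

/-- Affine map built from a linear functional plus a constant. -/
noncomputable def affOf {E : Type*} [AddCommGroup E] [Module ℝ E] (L : E →ₗ[ℝ] ℝ) (c : ℝ) :
    E →ᵃ[ℝ] ℝ where
  toFun := fun x => L x + c
  linear := L
  map_vadd' := by intro p v; simp [vadd_eq_add, map_add]; ring

lemma affOf_apply {E : Type*} [AddCommGroup E] [Module ℝ E] (L : E →ₗ[ℝ] ℝ) (c : ℝ) (x : E) :
    affOf L c x = L x + c := rfl

/-- Continuity of a finite sup' of continuous real functions. -/
lemma continuous_sup' {ι Z : Type*} [TopologicalSpace Z] {s : Finset ι} (hs : s.Nonempty)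
    (h : ι → Z → ℝ) (hc : ∀ i, Continuous (h i)) :
    Continuous fun p => s.sup' hs (fun i => h i p) := by
  induction hs using Finset.Nonempty.cons_induction with
  | singleton i =>
    rw [show (fun p => ({i} : Finset ι).sup' (Finset.singleton_nonempty i) (fun j => h j p)) = h i
      from funext fun p => Finset.sup'_singleton (fun j => h j p)]
    exact hc i
  | cons a s ha hne ih =>
    rw [show (fun p => (Finset.cons a s ha).sup' (Finset.cons_nonempty ha) fun i => h i p)
        = fun p => h a p ⊔ s.sup' hne fun i => h i p from funext fun p => Finset.sup'_cons hne (fun i => h i p)]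
    exact (hc a).sup ih

/-- Convexity of a finite sup' of convex functions. -/
lemma convexOn_sup' {ι E : Type*} [AddCommGroup E] [Module ℝ E] {X : Set E}
    {s : Finset ι} (hs : s.Nonempty) (h : ι → E → ℝ) (hc : ∀ i, ConvexOn ℝ X (h i)) :
    ConvexOn ℝ X (fun x => s.sup' hs (fun i => h i x)) := by
  induction hs using Finset.Nonempty.cons_induction with
  | singleton i =>
    rw [show (fun p => ({i} : Finset ι).sup' (Finset.singleton_nonempty i) (fun j => h j p)) = h i
      from funext fun p => Finset.sup'_singleton (fun j => h j p)]
    exact hc i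
  | cons a s ha hne ih =>
    rw [show (fun p => (Finset.cons a s ha).sup' (Finset.cons_nonempty ha) fun i => h i p)
        = fun p => h a p ⊔ s.sup' hne fun i => h i p from funext fun p => Finset.sup'_cons hne (fun i => h i p)]
    exact (hc a).sup ih

/-- An affine map plus a constant is convex on a convex set. -/
lemma affine_add_const_convexOn {E : Type*} [AddCommGroup E] [Module ℝ E] {X : Set E}
    (hX : Convex ℝ X) (a : E →ᵃ[ℝ] ℝ) (c : ℝ) :
    ConvexOn ℝ X (fun x => a x + c) := by
  refine ⟨hX, fun x hx y hy p q hp hq hpq => ?_⟩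
  simp only [smul_eq_mul]
  have := Convex.combo_affine_apply (f := a) (x := x) (y := y) hpq
  simp only [smul_eq_mul] at this
  rw [this]
  apply le_of_eq
  linear_combination (-c) * hpq
open Filter Topology

/-- Moreau–Yosida approximation: a bounded-below lsc function on a metric space is the
increasing pointwise limit of (Lipschitz) continuous functions. -/
lemma yosida_approx {Y : Type*} [MetricSpace Y] (m : Y → ℝ) (C : ℝ) (hC : ∀ y, C ≤ m y)
    (hm : LowerSemicontinuous m) :
    ∃ φ : ℕ → Y → ℝ, (∀ j, Continuous (φ j)) ∧ (∀ j y, φ j y ≤ m y) ∧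
      (∀ y, Tendsto (fun j => φ j y) atTop (𝓝 (m y))) := by
  rcases isEmpty_or_nonempty Y with hY | hY
  · exact ⟨fun _ _ => 0, fun j => continuous_const, fun j y => (IsEmpty.false y).elim,
      fun y => (IsEmpty.false y).elim⟩
  set φ : ℕ → Y → ℝ := fun j y => ⨅ y' : Y, (m y' + j * dist y y') with hφ
  have hbdd : ∀ (j : ℕ) (y : Y), BddBelow (Set.range fun y' => m y' + j * dist y y') := by
    intro j y
    refine ⟨C, ?_⟩
    rintro t ⟨y', rfl⟩
    dsimp only
    have h0 : (0:ℝ) ≤ j * dist y y' := by positivity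
    linarith [hC y']
  have hle : ∀ j y, φ j y ≤ m y := by
    intro j y
    have := ciInf_le (hbdd j y) y
    simpa using this
  have hlip : ∀ (j : ℕ) (y z : Y), φ j y ≤ φ j z + j * dist y z := by
    intro j y z
    rw [← sub_le_iff_le_add]
    refine le_ciInf fun y' => ?_
    rw [sub_le_iff_le_add]
    calc φ j y ≤ m y' + j * dist y y' := ciInf_le (hbdd j y) y'
      _ ≤ m y' + j * dist z y' + j * dist y z := by
          have h := dist_triangle y z y'
          have : (j:ℝ) * dist y y' ≤ j * (dist y z + dist z y') := by
            apply mul_le_mul_of_nonneg_left h (by positivity)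
          linarith
  have hcont : ∀ j, Continuous (φ j) := by
    intro j
    have : LipschitzWith (j : NNReal) (φ j) := by
      apply LipschitzWith.of_dist_le_mul
      intro y z
      rw [Real.dist_eq, abs_le]
      have h1 := hlip j y z
      have h2 := hlip j z y
      rw [dist_comm z y] at h2
      push_cast
      constructor <;> linarith
    exact this.continuous
  refine ⟨φ, hcont, hle, fun y => ?_⟩
  rw [tendsto_order]
  constructor
  · intro c hc
    obtain ⟨c', hc1, hc2⟩ := exists_between hc
    have hnhds : {y' | c' < m y'} ∈ 𝓝 y := hm y c' hc2
    obtain ⟨δ, hδ, hball⟩ := Metric.mem_nhds_iff.1 hnhds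
    obtain ⟨J, hJ⟩ := exists_nat_ge ((c' - C) / δ)
    have hJδ : c' - C ≤ J * δ := by
      rw [div_le_iff₀ hδ] at hJ
      linarith
    refine Filter.eventually_atTop.2 ⟨J, fun j hj => ?_⟩
    have : c' ≤ φ j y := by
      refine le_ciInf fun y' => ?_
      by_cases hd : dist y' y < δ
      · have : c' < m y' := hball hd
        have : (0:ℝ) ≤ j * dist y y' := by positivity
        linarith
      · push_neg at hd
        have hd' : δ ≤ dist y y' := by rwa [dist_comm] at hd
        have hj' : (J:ℝ) ≤ j := by exact_mod_cast hj
        have h1 : (J:ℝ) * δ ≤ j * dist y y' :=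
          calc (J:ℝ) * δ ≤ j * δ := mul_le_mul_of_nonneg_right hj' hδ.le
            _ ≤ j * dist y y' := mul_le_mul_of_nonneg_left hd' (by positivity)
        have h2 := hC y'
        linarith
      -- done
    linarith
  · intro c hc
    exact Filter.Eventually.of_forall fun j => lt_of_le_of_lt (hle j y) hc

/-- Berge-type lemma: the marginal `y ↦ ⨅ x ∈ X, (f x y - a x)` of a jointly lsc function
over a compact set is lower semicontinuous. -/
lemma marginal_lsc {E : Type*} [TopologicalSpace E] {Y : Type*} [MetricSpace Y]
    {X : Set E} (hXc : IsCompact X) (hXne : X.Nonempty)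
    (f : E → Y → ℝ) (hlsc : LowerSemicontinuousOn (fun p : E × Y => f p.1 p.2) (X ×ˢ Set.univ))
    (a : E → ℝ) (ha : Continuous a)
    (hbdd : ∀ y, BddBelow (Set.range fun x : X => f x y - a x)) :
    LowerSemicontinuous (fun y => ⨅ x : X, (f x y - a (x : E))) := by
  haveI := hXne.to_subtype
  intro y₀ c hc
  obtain ⟨c', hcc', hc'⟩ := exists_between hc
  have key : ∀ x ∈ X, ∃ U : Set E, U ∈ 𝓝 x ∧ ∃ V ∈ 𝓝 y₀,
      ∀ x' ∈ U ∩ X, ∀ y' ∈ V, c' < f x' y' - a x' := by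
    intro x hx
    have hterm : c' < f x y₀ - a x := by
      have h := ciInf_le (hbdd y₀) (⟨x, hx⟩ : X)
      exact lt_of_lt_of_le hc' h
    set ε : ℝ := (f x y₀ - a x - c') / 2 with hε
    have hεpos : 0 < ε := by simp only [hε]; linarith
    have h1 : ∀ᶠ p in 𝓝[X ×ˢ Set.univ] ((x, y₀) : E × Y), c' + a x + ε < f p.1 p.2 := by
      apply hlsc (x, y₀) ⟨hx, Set.mem_univ _⟩
      simp only [hε]; linarith
    rw [nhdsWithin_prod_eq, nhdsWithin_univ] at h1
    obtain ⟨t₁, ht₁, t₂, ht₂, hts⟩ := Filter.mem_prod_iff.1 h1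
    obtain ⟨U₁, hU₁o, hxU₁, hU₁⟩ := mem_nhdsWithin.1 ht₁
    have h2 : {x' | a x' < a x + ε} ∈ 𝓝 x := by
      refine (isOpen_Iio.preimage ha).mem_nhds ?_
      simp [hεpos]
    refine ⟨U₁ ∩ {x' | a x' < a x + ε}, Filter.inter_mem (hU₁o.mem_nhds hxU₁) h2, t₂, ht₂, ?_⟩
    rintro x' ⟨⟨hxU, hax⟩, hxX⟩ y' hy'
    have hmem : ((x', y') : E × Y) ∈ t₁ ×ˢ t₂ := ⟨hU₁ ⟨hxU, hxX⟩, hy'⟩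
    have h3 : c' + a x + ε < f x' y' := hts hmem
    have h4 : a x' < a x + ε := hax
    linarith
  choose! U hU V hV hprop using key
  obtain ⟨t, htX, htcov⟩ := hXc.elim_nhds_subcover U (fun x hx => hU x hx)
  have hV₀ : (⋂ z ∈ t, V z) ∈ 𝓝 y₀ := by
    refine (Filter.biInter_finset_mem t).2 fun z hz => hV z (htX z hz)
  refine Filter.mem_of_superset hV₀ ?_
  intro y' hy'
  have hstep : ∀ x : X, c' ≤ f x y' - a (x : E) := by
    rintro ⟨x', hx'⟩
    obtain ⟨z, hz, hxz⟩ := Set.mem_iUnion₂.1 (htcov hx')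
    have hyV : y' ∈ V z := by
      have := Set.mem_iInter₂.1 hy' z hz
      exact this
    exact (hprop z (htX z hz) x' ⟨hxz, hx'⟩ y' hyV).le
  have : c' ≤ ⨅ x : X, (f x y' - a (x : E)) := le_ciInf hstep
  exact lt_of_lt_of_le hcc' this
/-- Hahn–Banach: a continuous affine minorant of a convex lsc function, large at a given point. -/
lemma exists_affine_minorant {E : Type*} [AddCommGroup E] [Module ℝ E] [TopologicalSpace E]
    [IsTopologicalAddGroup E] [ContinuousSMul ℝ E] [LocallyConvexSpace ℝ E] [T2Space E]
    {X : Set E} (hXc : IsCompact X) {g : E → ℝ}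
    (hg : LowerSemicontinuousOn g X) (hgc : ConvexOn ℝ X g)
    {x₀ : E} (hx₀ : x₀ ∈ X) {c : ℝ} (hc : c < g x₀) :
    ∃ a : E →ᵃ[ℝ] ℝ, Continuous a ∧ (∀ x ∈ X, a x ≤ g x) ∧ c < a x₀ := by
  set K : Set (E × ℝ) := {p | p.1 ∈ X ∧ g p.1 ≤ p.2} with hK
  have hKconv : Convex ℝ K := by
    rintro ⟨x, s⟩ ⟨hx, hs⟩ ⟨y, t⟩ ⟨hy, ht⟩ p q hp hq hpq
    refine ⟨hgc.1 hx hy hp hq hpq, ?_⟩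
    have h2 := hgc.2 hx hy hp hq hpq
    simp only [smul_eq_mul] at h2 ⊢
    have : p * g x + q * g y ≤ p * s + q * t := by
      have := mul_le_mul_of_nonneg_left hs hp
      have := mul_le_mul_of_nonneg_left ht hq
      linarith
    exact le_trans h2 this
  have hKclosed : IsClosed K := by
    rw [← isOpen_compl_iff, isOpen_iff_mem_nhds]
    rintro ⟨x, s⟩ hp
    by_cases hx : x ∈ X
    · have hs : s < g x := by
        by_contra h
        exact hp ⟨hx, not_lt.1 h⟩
      obtain ⟨r, hr1, hr2⟩ := exists_between hs
      have := hg x hx r hr2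
      obtain ⟨U, hUo, hxU, hU⟩ := mem_nhdsWithin.1 this
      refine Filter.mem_of_superset (prod_mem_nhds (hUo.mem_nhds hxU) (Iio_mem_nhds hr1)) ?_
      rintro ⟨y, t⟩ ⟨hyU, ht⟩ ⟨hyX, hgy⟩
      have : r < g y := hU ⟨hyU, hyX⟩
      simp only [Set.mem_Iio] at ht
      linarith
    · refine Filter.mem_of_superset
        (prod_mem_nhds ((hXc.isClosed.isOpen_compl).mem_nhds hx) Filter.univ_mem) ?_
      rintro ⟨y, t⟩ ⟨hy, -⟩ ⟨hyX, -⟩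
      exact hy hyX
  have hpt : ((x₀, c) : E × ℝ) ∉ K := fun h => absurd h.2 (not_le.2 hc)
  obtain ⟨ℓ, u, hu1, hu2⟩ := geometric_hahn_banach_point_closed hKconv hKclosed hpt
  set L : E → ℝ := fun x => ℓ (x, 0) with hL
  set r : ℝ := ℓ (0, 1) with hr
  have hdec : ∀ (x : E) (t : ℝ), ℓ (x, t) = L x + t * r := by
    intro x t
    have : ((x, t) : E × ℝ) = (x, 0) + t • ((0 : E), (1 : ℝ)) := by
      simp [Prod.ext_iff]
    rw [this, map_add, map_smul]
    simp [hL, hr, smul_eq_mul]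
  have hrpos : 0 < r := by
    have h1 : u < L x₀ + g x₀ * r := by
      have := hu2 (x₀, g x₀) ⟨hx₀, le_refl _⟩
      rwa [hdec] at this
    have h2 : L x₀ + c * r < u := by
      have := hu1
      rwa [hdec] at this
    nlinarith [sub_pos.2 hc]
  -- the affine map x ↦ (u - L x) / r
  refine ⟨affOf (-(r⁻¹) • (ℓ.toLinearMap.comp (LinearMap.inl ℝ E ℝ))) (r⁻¹ * u), ?_, ?_, ?_⟩
  · have hcont : Continuous L := ℓ.continuous.comp (continuous_id.prodMk continuous_const)
    have : Continuous fun x => -(r⁻¹) * L x + r⁻¹ * u := by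
      exact ((continuous_const.mul hcont).add continuous_const)
    convert this using 1
    funext x
    simp [affOf_apply, hL, smul_eq_mul]
  · intro x hx
    have h1 : u < L x + g x * r := by
      have := hu2 (x, g x) ⟨hx, le_refl _⟩
      rwa [hdec] at this
    have : affOf (-(r⁻¹) • (ℓ.toLinearMap.comp (LinearMap.inl ℝ E ℝ))) (r⁻¹ * u) x
        = -(r⁻¹) * L x + r⁻¹ * u := by
      simp [affOf_apply, hL, smul_eq_mul]
    rw [this]
    rw [← sub_nonneg]
    have hrinv : 0 < r⁻¹ := inv_pos.2 hrpos
    have : g x - (-(r⁻¹) * L x + r⁻¹ * u) = r⁻¹ * ((L x + g x * r) - u) := by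
      field_simp
      ring
    rw [this]
    exact le_of_lt (mul_pos hrinv (sub_pos.2 h1))
  · have h2 : L x₀ + c * r < u := by
      have := hu1
      rwa [hdec] at this
    have : affOf (-(r⁻¹) • (ℓ.toLinearMap.comp (LinearMap.inl ℝ E ℝ))) (r⁻¹ * u) x₀
        = -(r⁻¹) * L x₀ + r⁻¹ * u := by
      simp [affOf_apply, hL, smul_eq_mul]
    rw [this]
    rw [← sub_pos]
    have hrinv : 0 < r⁻¹ := inv_pos.2 hrpos
    have : -(r⁻¹) * L x₀ + r⁻¹ * u - c = r⁻¹ * (u - (L x₀ + c * r)) := by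
      field_simp
      ring
    rw [this]
    exact mul_pos hrinv (sub_pos.2 h2)

/-- Lemma A.7: Piecewise-convex continuous approximation from below: a
bounded lower semicontinuous `f : X × Y → ℝ` that is convex in `x` is the increasing
pointwise limit of continuous functions, convex in `x`, each a finite maximum of
functions of the form `a(x) + φ(y)` with `a` continuous affine and `φ` continuous. -/
theorem stmt_18 {E : Type*} [AddCommGroup E] [Module ℝ E] [TopologicalSpace E]
    [IsTopologicalAddGroup E] [ContinuousSMul ℝ E] [LocallyConvexSpace ℝ E] [T2Space E]
    (X : Set E) (hXc : IsCompact X) (hXconv : Convex ℝ X) (hXne : X.Nonempty)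
    (hXmetr : TopologicalSpace.MetrizableSpace ↥X)
    {Y : Type*} [MetricSpace Y]
    (f : E → Y → ℝ)
    (hbdd : ∃ M : ℝ, ∀ x ∈ X, ∀ y, |f x y| ≤ M)
    (hlsc : LowerSemicontinuousOn (fun p : E × Y => f p.1 p.2) (X ×ˢ Set.univ))
    (hconv : ∀ y, ConvexOn ℝ X (fun x => f x y)) :
    ∃ fn : ℕ → E → Y → ℝ,
      -- continuity
      (∀ n, Continuous (fun p : E × Y => fn n p.1 p.2)) ∧
      -- convexity in x
      (∀ n y, ConvexOn ℝ X (fun x => fn n x y)) ∧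
      -- increasing and below f on X × Y
      (∀ n, ∀ x ∈ X, ∀ y, fn n x y ≤ fn (n + 1) x y) ∧
      (∀ n, ∀ x ∈ X, ∀ y, fn n x y ≤ f x y) ∧
      -- pointwise convergence to f on X × Y
      (∀ x ∈ X, ∀ y, Tendsto (fun n => fn n x y) atTop (nhds (f x y))) ∧
      -- finite-max-of-affine-plus-continuous form
      (∀ n, ∃ k : ℕ, ∃ a : Fin (k + 1) → E →ᵃ[ℝ] ℝ, ∃ φ : Fin (k + 1) → Y → ℝ,
        (∀ i, Continuous (a i)) ∧ (∀ i, Continuous (φ i)) ∧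
        ∀ x y, fn n x y =
          Finset.univ.sup' Finset.univ_nonempty (fun i : Fin (k + 1) => a i x + φ i y)) := by
  classical
  obtain ⟨M, hM⟩ := hbdd
  haveI : Nonempty ↥X := hXne.to_subtype
  haveI := hXmetr
  letI : MetricSpace ↥X := TopologicalSpace.metrizableSpaceMetric ↥X
  haveI : CompactSpace ↥X := isCompact_iff_compactSpace.1 hXc
  -- lsc of f(·, y) on X for each y
  have hlscy : ∀ y, LowerSemicontinuousOn (fun x => f x y) X := by
    intro y x hx c hc
    have h := hlsc (x, y) ⟨hx, Set.mem_univ _⟩ c hc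
    have htd : Tendsto (fun x' : E => ((x', y) : E × Y)) (𝓝[X] x) (𝓝[X ×ˢ Set.univ] (x, y)) := by
      rw [tendsto_nhdsWithin_iff]
      refine ⟨(continuous_id.prodMk continuous_const).continuousWithinAt, ?_⟩
      exact eventually_mem_nhdsWithin.mono fun x' hx' => ⟨hx', Set.mem_univ _⟩
    exact htd.eventually h
  -- the set of restrictions of continuous affine maps
  set T : Set C(↥X, ℝ) := {g | ∃ a : E →ᵃ[ℝ] ℝ, Continuous a ∧ ∀ x : ↥X, g x = a x} with hT
  have hTne : T.Nonempty := by
    refine ⟨ContinuousMap.const _ 0, AffineMap.const ℝ E (0 : ℝ), ?_, fun x => rfl⟩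
    rw [AffineMap.coe_const]
    exact continuous_const
  haveI : Nonempty ↥T := hTne.to_subtype
  obtain ⟨D, hDc, hDd⟩ := TopologicalSpace.exists_countable_dense ↥T
  have hDne : D.Nonempty := hDd.nonempty
  obtain ⟨e, he⟩ := hDc.exists_eq_range hDne
  have hsel : ∀ k : ℕ, ∃ a : E →ᵃ[ℝ] ℝ, Continuous a ∧ ∀ x : ↥X, ((e k : ↥T) : C(↥X, ℝ)) x = a x :=
    fun k => (e k).2
  choose ks hksc hks using hsel
  -- density of the countable family
  have hdense : ∀ (a : E →ᵃ[ℝ] ℝ), Continuous a → ∀ ε > 0, ∃ k : ℕ, ∀ x ∈ X, |a x - ks k x| ≤ ε := by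
    intro a ha ε hε
    set gc : C(↥X, ℝ) := ⟨fun x => a x, ha.comp continuous_subtype_val⟩ with hgc
    have hgT : gc ∈ T := ⟨a, ha, fun x => rfl⟩
    obtain ⟨d, hdD, hdist⟩ := hDd.exists_dist_lt (⟨gc, hgT⟩ : ↥T) hε
    have : d ∈ Set.range e := he ▸ hdD
    obtain ⟨k, hk⟩ := this
    refine ⟨k, fun x hx => ?_⟩
    have h1 : dist gc ((e k : ↥T) : C(↥X, ℝ)) < ε := by
      rw [hk]
      rw [Subtype.dist_eq] at hdist
      exact hdist
    have h2 := ContinuousMap.dist_apply_le_dist (f := gc) (g := ((e k : ↥T) : C(↥X, ℝ))) ⟨x, hx⟩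
    have h3 : ((e k : ↥T) : C(↥X, ℝ)) ⟨x, hx⟩ = ks k x := hks k ⟨x, hx⟩
    have h4 : gc ⟨x, hx⟩ = a x := rfl
    rw [Real.dist_eq, h3, h4] at h2
    linarith
  -- bounds and marginals
  have hbddm : ∀ k y, BddBelow (Set.range fun x : X => f x y - ks k x) := by
    intro k y
    obtain ⟨B, hB⟩ := hXc.exists_bound_of_continuousOn (hksc k).continuousOn
    refine ⟨-M - B, ?_⟩
    rintro t ⟨x, rfl⟩
    have h1 := (abs_le.1 (hM x.1 x.2 y)).1
    have h2 := hB x.1 x.2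
    rw [Real.norm_eq_abs] at h2
    have h3 := (abs_le.1 h2).2
    dsimp only
    linarith
  set m : ℕ → Y → ℝ := fun k y => ⨅ x : X, (f x y - ks k x) with hm
  have hmle : ∀ k y, ∀ x ∈ X, m k y ≤ f x y - ks k x :=
    fun k y x hx => ciInf_le (hbddm k y) (⟨x, hx⟩ : X)
  -- Yosida approximations of the marginals
  have hyos : ∀ k : ℕ, ∃ φ : ℕ → Y → ℝ, (∀ j, Continuous (φ j)) ∧ (∀ j y, φ j y ≤ m k y) ∧
      (∀ y, Tendsto (fun j => φ j y) atTop (𝓝 (m k y))) := by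
    intro k
    obtain ⟨B, hB⟩ := hXc.exists_bound_of_continuousOn (hksc k).continuousOn
    have hCk : ∀ y, -M - B ≤ m k y := by
      intro y
      refine le_ciInf fun x => ?_
      have h1 := (abs_le.1 (hM x.1 x.2 y)).1
      have h2 := hB x.1 x.2
      rw [Real.norm_eq_abs] at h2
      have h3 := (abs_le.1 h2).2
      linarith
    exact yosida_approx (m k) (-M - B) hCk
      (marginal_lsc hXc hXne f hlsc (ks k) (hksc k) (hbddm k))
  choose φ hφc hφle hφt using hyos
  -- the approximating sequence
  set g : ℕ → E → Y → ℝ :=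
    fun i x y => ks (Nat.unpair i).1 x + φ (Nat.unpair i).1 (Nat.unpair i).2 y with hg
  set fn : ℕ → E → Y → ℝ :=
    fun n x y => Finset.univ.sup' Finset.univ_nonempty (fun i : Fin (n + 1) => g (i : ℕ) x y)
    with hfn
  have hfnle : ∀ n, ∀ x ∈ X, ∀ y, fn n x y ≤ f x y := by
    intro n x hx y
    refine Finset.sup'_le _ _ fun i _ => ?_
    have h1 := hφle (Nat.unpair (i : ℕ)).1 (Nat.unpair (i : ℕ)).2 y
    have h2 := hmle (Nat.unpair (i : ℕ)).1 y x hx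
    simp only [hg]
    linarith
  have hfnmono : ∀ n x y, fn n x y ≤ fn (n + 1) x y := by
    intro n x y
    refine Finset.sup'_le _ _ fun i _ => ?_
    have : g (i : ℕ) x y = g ((i.castSucc : Fin (n + 2)) : ℕ) x y := by
      rw [Fin.coe_castSucc]
    rw [this]
    exact Finset.le_sup' (fun i : Fin (n + 2) => g (i : ℕ) x y) (Finset.mem_univ i.castSucc)
  refine ⟨fn, ?_, ?_, fun n x _ y => hfnmono n x y, hfnle, ?_, ?_⟩
  · -- continuity
    intro n
    exact continuous_sup' Finset.univ_nonempty
      (fun (i : Fin (n + 1)) (p : E × Y) => g (i : ℕ) p.1 p.2)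
      (fun i => ((hksc _).comp continuous_fst).add ((hφc _ _).comp continuous_snd))
  · -- convexity
    intro n y
    exact convexOn_sup' Finset.univ_nonempty (fun (i : Fin (n + 1)) (x : E) => g (i : ℕ) x y)
      (fun i => affine_add_const_convexOn hXconv (ks _) _)
  · -- convergence
    intro x hx y
    have hmono : Monotone fun n => fn n x y := monotone_nat_of_le_succ fun n => hfnmono n x y
    have hbddA : BddAbove (Set.range fun n => fn n x y) := by
      refine ⟨f x y, ?_⟩
      rintro t ⟨n, rfl⟩
      exact hfnle n x hx y
    have hkey : ∀ c, c < f x y → ∃ n, c < fn n x y := by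
      intro c hc
      obtain ⟨a, hac, hale, hax⟩ := exists_affine_minorant hXc (hlscy y) (hconv y) hx hc
      set ε : ℝ := (a x - c) / 3 with hε
      have hεpos : 0 < ε := by simp only [hε]; linarith
      obtain ⟨k, hk⟩ := hdense a hac ε hεpos
      have hmk : -ε ≤ m k y := by
        refine le_ciInf fun x' => ?_
        have h1 := hale x'.1 x'.2
        have h2 := (abs_le.1 (hk x'.1 x'.2)).1
        linarith
      have hkx : a x - ε ≤ ks k x := by
        have := (abs_le.1 (hk x hx)).2
        linarith
      obtain ⟨j, hj⟩ := ((tendsto_order.1 (hφt k y)).1 (m k y - ε) (by linarith)).exists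
      refine ⟨Nat.pair k j, ?_⟩
      have hlt : Nat.pair k j < Nat.pair k j + 1 := Nat.lt_succ_self _
      have hle' := Finset.le_sup' (fun i : Fin (Nat.pair k j + 1) => g (i : ℕ) x y)
        (Finset.mem_univ (⟨Nat.pair k j, hlt⟩ : Fin (Nat.pair k j + 1)))
      have hval : g (Nat.pair k j) x y = ks k x + φ k j y := by
        simp only [hg, Nat.unpair_pair]
      have : c < g (Nat.pair k j) x y := by
        rw [hval]
        linarith
      exact lt_of_lt_of_le this hle'
    have htend := tendsto_atTop_ciSup hmono hbddA
    have heq : (⨆ n, fn n x y) = f x y := by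
      refine le_antisymm (ciSup_le fun n => hfnle n x hx y) ?_
      by_contra h
      push_neg at h
      obtain ⟨n, hn⟩ := hkey _ h
      exact absurd (le_ciSup hbddA n) (not_le.2 hn)
    rwa [heq] at htend
  · -- the finite-max form
    intro n
    refine ⟨n, fun i : Fin (n + 1) => ks (Nat.unpair (i : ℕ)).1,
      fun i : Fin (n + 1) => fun y => φ (Nat.unpair (i : ℕ)).1 (Nat.unpair (i : ℕ)).2 y,
      fun i => hksc _, fun i => hφc _ _, fun x y => rfl⟩
end

section
/- Let d be the divisible (Bayes-homeomorphic) updating rule d(x,y) = F⁻¹((F(x) ⊘ x ⊙ y)/⟨F(x) ⊘ x, y⟩) for a homeomorphism F of the simplex Δ(Ω), where ⊙ and ⊘ denote componentwise product and division. Then the associated two-stage update collapses: for all interior x, y, z, d_II(x, z; y) := d̂(y, d(x,y), z) = d(x,z), where d̂(x_B, x_D, y) := d(x_D, (x_D ⊘ x_B ⊙ y)/⟨x_D ⊘ x_B, y⟩). In particular, Bayes' rule d(x,y) = y satisfies d_II(x,z;y) = z for all interior x, y, z. -/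
open Finset

/-- Componentwise (Hadamard) product of two vectors. -/
noncomputable def hadProd {Ω : Type*} (u v : Ω → ℝ) : Ω → ℝ := fun ω => u ω * v ω

/-- Componentwise division of two vectors. -/
noncomputable def hadDiv {Ω : Type*} (u v : Ω → ℝ) : Ω → ℝ := fun ω => u ω / v ω

/-- The standard inner product `⟨u, v⟩ = ∑ u_ω v_ω`. -/
noncomputable def ip {Ω : Type*} [Fintype Ω] (u v : Ω → ℝ) : ℝ := ∑ ω, u ω * v ω

/-- The interior of the simplex: strictly positive vectors summing to one. -/
def interiorSimplex (Ω : Type*) [Fintype Ω] : Set (Ω → ℝ) :=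
  {p | (∀ ω, 0 < p ω) ∧ ∑ ω, p ω = 1}

/-- The Bayesian-posterior correction `(x_D ⊘ x_B ⊙ y) / ⟨x_D ⊘ x_B, y⟩`. -/
noncomputable def bayesKer {Ω : Type*} [Fintype Ω] (xB xD y : Ω → ℝ) : Ω → ℝ :=
  (ip (hadDiv xD xB) y)⁻¹ • hadProd (hadDiv xD xB) y

/-- The divisible updating rule `d(x,y) = F⁻¹((F(x) ⊘ x ⊙ y)/⟨F(x) ⊘ x, y⟩)`. -/
noncomputable def divRule {Ω : Type*} [Fintype Ω] (F Finv : (Ω → ℝ) → (Ω → ℝ))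
    (x y : Ω → ℝ) : Ω → ℝ :=
  Finv (bayesKer x (F x) y)

/-- The correction `d̂(x_B, x_D, y) = d(x_D, (x_D ⊘ x_B ⊙ y)/⟨x_D ⊘ x_B, y⟩)`. -/
noncomputable def dhat {Ω : Type*} [Fintype Ω] (F Finv : (Ω → ℝ) → (Ω → ℝ))
    (xB xD y : Ω → ℝ) : Ω → ℝ :=
  divRule F Finv xD (bayesKer xB xD y)

lemma bk_def {Ω : Type*} [Fintype Ω] (xB xD y : Ω → ℝ) :
    bayesKer xB xD y = (∑ ω, xD ω / xB ω * y ω)⁻¹ • fun ω => xD ω / xB ω * y ω := by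
  funext ω; simp [bayesKer, ip, hadDiv, hadProd]

lemma norm_smul_eq {Ω : Type*} [Fintype Ω] (c : ℝ) (hc : c ≠ 0) (g : Ω → ℝ)
    (hs : ∑ ω, g ω ≠ 0) :
    (∑ ω, c * g ω)⁻¹ • (fun ω => c * g ω) = (∑ ω, g ω)⁻¹ • g := by
  funext ω
  simp only [Pi.smul_apply, smul_eq_mul, ← Finset.mul_sum, mul_inv]
  field_simp

lemma bk_mem {Ω : Type*} [Fintype Ω] [Nonempty Ω] {xB xD y : Ω → ℝ}
    (hB : ∀ ω, 0 < xB ω) (hD : ∀ ω, 0 < xD ω) (hy : ∀ ω, 0 < y ω) :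
    bayesKer xB xD y ∈ interiorSimplex Ω := by
  have ht : 0 < ∑ ω, xD ω / xB ω * y ω :=
    Finset.sum_pos (fun ω _ => mul_pos (div_pos (hD ω) (hB ω)) (hy ω)) Finset.univ_nonempty
  rw [bk_def]
  constructor
  · intro ω
    simp only [Pi.smul_apply, smul_eq_mul]
    exact mul_pos (inv_pos.mpr ht) (mul_pos (div_pos (hD ω) (hB ω)) (hy ω))
  · simp only [Pi.smul_apply, smul_eq_mul, ← Finset.mul_sum]
    exact inv_mul_cancel₀ (ne_of_gt ht)

lemma bk_key {Ω : Type*} [Fintype Ω] [Nonempty Ω] {x Fx y z w : Ω → ℝ}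
    (hx : ∀ ω, 0 < x ω) (hFx : ∀ ω, 0 < Fx ω) (hy : ∀ ω, 0 < y ω)
    (hz : ∀ ω, 0 < z ω) (hw : ∀ ω, 0 < w ω) :
    bayesKer w (bayesKer x Fx y) (bayesKer y w z) = bayesKer x Fx z := by
  have ht : 0 < ∑ ω, Fx ω / x ω * y ω :=
    Finset.sum_pos (fun ω _ => mul_pos (div_pos (hFx ω) (hx ω)) (hy ω)) Finset.univ_nonempty
  have hs : 0 < ∑ ω, w ω / y ω * z ω :=
    Finset.sum_pos (fun ω _ => mul_pos (div_pos (hw ω) (hy ω)) (hz ω)) Finset.univ_nonempty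
  have hg : 0 < ∑ ω, Fx ω / x ω * z ω :=
    Finset.sum_pos (fun ω _ => mul_pos (div_pos (hFx ω) (hx ω)) (hz ω)) Finset.univ_nonempty
  have e1 : ∀ ω, bayesKer x Fx y ω = (∑ ω', Fx ω' / x ω' * y ω')⁻¹ * (Fx ω / x ω * y ω) :=
    fun ω => by rw [bk_def]; rfl
  have e2 : ∀ ω, bayesKer y w z ω = (∑ ω', w ω' / y ω' * z ω')⁻¹ * (w ω / y ω * z ω) :=
    fun ω => by rw [bk_def]; rfl
  have e3 : ∀ ω, bayesKer x Fx y ω / w ω * bayesKer y w z ω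
      = ((∑ ω', Fx ω' / x ω' * y ω')⁻¹ * (∑ ω', w ω' / y ω' * z ω')⁻¹)
        * (Fx ω / x ω * z ω) := by
    intro ω
    rw [e1, e2]
    have hwω := (hw ω).ne'
    have hyω := (hy ω).ne'
    have hxω := (hx ω).ne'
    generalize (∑ ω', Fx ω' / x ω' * y ω')⁻¹ = T
    generalize (∑ ω', w ω' / y ω' * z ω')⁻¹ = S
    field_simp
  rw [bk_def w, bk_def x Fx z]
  simp only [e3]
  exact norm_smul_eq _ (mul_ne_zero (inv_ne_zero ht.ne') (inv_ne_zero hs.ne')) _ hg.ne'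

lemma bk_self {Ω : Type*} [Fintype Ω] {x z : Ω → ℝ} (hx : ∀ ω, 0 < x ω)
    (hz : ∑ ω, z ω = 1) : bayesKer x x z = z := by
  have h : ∀ ω, x ω / x ω * z ω = z ω := fun ω => by rw [div_self (hx ω).ne', one_mul]
  rw [bk_def]
  simp only [h]
  rw [hz]
  simp

lemma part1 {Ω : Type*} [Fintype Ω]
    (F Finv : (Ω → ℝ) → (Ω → ℝ))
    (hF : ∀ p ∈ interiorSimplex Ω, F p ∈ interiorSimplex Ω)
    (hFinv : ∀ p ∈ interiorSimplex Ω, Finv p ∈ interiorSimplex Ω)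
    (hright : ∀ p ∈ interiorSimplex Ω, F (Finv p) = p) :
    ∀ x ∈ interiorSimplex Ω, ∀ y ∈ interiorSimplex Ω, ∀ z ∈ interiorSimplex Ω,
      dhat F Finv y (divRule F Finv x y) z = divRule F Finv x z := by
  intro x hx y hy z hz
  have hne : Nonempty Ω := by
    rcases isEmpty_or_nonempty Ω with h | h
    · exfalso; have := hx.2; simp at this
    · exact h
  have hFx := hF x hx
  have hk : bayesKer x (F x) y ∈ interiorSimplex Ω := bk_mem hx.1 hFx.1 hy.1
  have hw : Finv (bayesKer x (F x) y) ∈ interiorSimplex Ω := hFinv _ hk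
  show Finv (bayesKer (Finv (bayesKer x (F x) y)) (F (Finv (bayesKer x (F x) y)))
      (bayesKer y (Finv (bayesKer x (F x) y)) z)) = Finv (bayesKer x (F x) z)
  rw [hright _ hk]
  exact congrArg Finv (bk_key hx.1 hFx.1 hy.1 hz.1 hw.1)

/-- For a divisible (Bayes-homeomorphic) updating rule given by a
bijection `F` of the simplex, the two-stage update collapses:
`d_II(x, z; y) = d̂(y, d(x,y), z) = d(x,z)` for interior `x, y, z`; in particular,
Bayes' rule (`F = id`) satisfies `d_II(x, z; y) = z`. -/
theorem stmt_19 {Ω : Type*} [Fintype Ω]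
    (F Finv : (Ω → ℝ) → (Ω → ℝ))
    (hF : ∀ p ∈ interiorSimplex Ω, F p ∈ interiorSimplex Ω)
    (hFinv : ∀ p ∈ interiorSimplex Ω, Finv p ∈ interiorSimplex Ω)
    (hleft : ∀ p ∈ interiorSimplex Ω, Finv (F p) = p)
    (hright : ∀ p ∈ interiorSimplex Ω, F (Finv p) = p) :
    (∀ x ∈ interiorSimplex Ω, ∀ y ∈ interiorSimplex Ω, ∀ z ∈ interiorSimplex Ω,
      dhat F Finv y (divRule F Finv x y) z = divRule F Finv x z) ∧
    (∀ x ∈ interiorSimplex Ω, ∀ y ∈ interiorSimplex Ω, ∀ z ∈ interiorSimplex Ω,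
      dhat (fun p => p) (fun p => p) y (divRule (fun p => p) (fun p => p) x y) z
        = z) := by
  constructor
  · exact part1 F Finv hF hFinv hright
  · intro x hx y hy z hz
    have h := part1 (fun p => p) (fun p => p) (fun p hp => hp) (fun p hp => hp)
      (fun p _ => rfl) x hx y hy z hz
    rw [h]
    show bayesKer x x z = z
    exact bk_self hx.1 hz.2
end
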